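/- arXiv:1011.4785 — 6 statements merged into one kernel-verified Lean document; each statement's English description precedes it below -/
import Mathlib

section
/- Let (Ω, Σ, μ) be an atomless measure space, and let f_1, ..., f_n be integrable simple functions on Ω. Then for every λ ∈ [0,1] there exists a measurable partition Ω = A ⊔ B such that ∫_A f_j dμ = λ ∫_Ω f_j dμ and ∫_B f_j dμ = (1-λ) ∫_Ω f_j dμ for every j = 1, ..., n. -/
open MeasureTheory
open scoped ENNReal

/-- A measure is atomless if every set of positive measure has a measurable subset of
strictly smaller positive measure. -/
def MeasureAtomless {Ω : Type*} [MeasurableSpace Ω] (μ : Measure Ω) : Prop :=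
  ∀ A : Set Ω, MeasurableSet A → 0 < μ A →
    ∃ B ⊆ A, MeasurableSet B ∧ 0 < μ B ∧ μ B < μ A


lemma atomless_half {Ω : Type*} [MeasurableSpace Ω] {μ : Measure Ω}
    (hμ : MeasureAtomless μ) {S : Set Ω} (hS : MeasurableSet S) (h0 : 0 < μ S)
    (hfin : μ S < ⊤) :
    ∃ T, T ⊆ S ∧ MeasurableSet T ∧ 0 < μ T ∧ μ T ≤ μ S / 2 := by
  obtain ⟨B, hBS, hBm, hB0, hBlt⟩ := hμ S hS h0
  rcases le_or_gt (μ B) (μ S / 2) with h | h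
  · exact ⟨B, hBS, hBm, hB0, h⟩
  · have hdiff : μ (S \ B) = μ S - μ B := measure_diff hBS hBm.nullMeasurableSet hBlt.ne_top
    refine ⟨S \ B, Set.diff_subset, hS.diff hBm, ?_, ?_⟩
    · rw [hdiff]; exact tsub_pos_of_lt hBlt
    · rw [hdiff, tsub_le_iff_right]
      calc μ S = μ S / 2 + μ S / 2 := (ENNReal.add_halves _).symm
      _ ≤ μ S / 2 + μ B := add_le_add_right h.le _

lemma atomless_small {Ω : Type*} [MeasurableSpace Ω] {μ : Measure Ω}
    (hμ : MeasureAtomless μ) {S : Set Ω} (hS : MeasurableSet S) (h0 : 0 < μ S)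
    (hfin : μ S < ⊤) {ε : ℝ≥0∞} (hε : 0 < ε) :
    ∃ T, T ⊆ S ∧ MeasurableSet T ∧ 0 < μ T ∧ μ T ≤ ε := by
  have hdd : ∀ (a : ℝ≥0∞) (k : ℕ), a / 2 ^ k / 2 = a / 2 ^ (k + 1) := by
    intro a k
    rw [pow_succ, div_eq_mul_inv, div_eq_mul_inv, div_eq_mul_inv,
      ENNReal.mul_inv (Or.inl (by positivity)) (Or.inr two_ne_zero), mul_assoc]
  have main : ∀ k : ℕ, ∃ T, T ⊆ S ∧ MeasurableSet T ∧ 0 < μ T ∧ μ T ≤ μ S / 2 ^ k := by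
    intro k
    induction k with
    | zero => exact ⟨S, subset_rfl, hS, h0, by simp⟩
    | succ k ih =>
      obtain ⟨T, hTS, hTm, hT0, hTle⟩ := ih
      obtain ⟨U, hUT, hUm, hU0, hUle⟩ :=
        atomless_half hμ hTm hT0
          (lt_of_le_of_lt hTle (ENNReal.div_lt_top hfin.ne (by positivity)))
      refine ⟨U, hUT.trans hTS, hUm, hU0, hUle.trans ?_⟩
      rw [← hdd]
      exact ENNReal.div_le_div_right hTle 2
  rcases eq_or_ne ε ⊤ with rfl | hεtop
  · exact ⟨S, subset_rfl, hS, h0, le_top⟩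
  obtain ⟨m, hm⟩ := ENNReal.exists_nat_gt (show μ S / ε ≠ ⊤ from
    (ENNReal.div_lt_top hfin.ne hε.ne').ne)
  obtain ⟨T, hTS, hTm, hT0, hTle⟩ := main m
  refine ⟨T, hTS, hTm, hT0, hTle.trans ?_⟩
  rw [ENNReal.div_le_iff (by positivity) (by exact (ENNReal.pow_ne_top (by simp)))]
  have h1 : μ S < (m : ℝ≥0∞) * ε :=
    (ENNReal.div_lt_iff (Or.inl hε.ne') (Or.inl hεtop)).1 hm
  have h2 : (m : ℝ≥0∞) ≤ 2 ^ m := by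
    exact_mod_cast Nat.cast_le.2 (Nat.le_of_lt (Nat.lt_two_pow_self))
  calc μ S ≤ (m : ℝ≥0∞) * ε := h1.le
  _ ≤ 2 ^ m * ε := mul_le_mul_left h2 _
  _ = ε * 2 ^ m := mul_comm _ _

lemma atomless_sierpinski {Ω : Type*} [MeasurableSpace Ω] {μ : Measure Ω}
    (hμ : MeasureAtomless μ) {S : Set Ω} (hS : MeasurableSet S) (hfin : μ S ≠ ⊤)
    {c : ℝ≥0∞} (hc : c ≤ μ S) :
    ∃ T, T ⊆ S ∧ MeasurableSet T ∧ μ T = c := by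
  classical
  set Adm : Set Ω → Prop := fun T => T ⊆ S ∧ MeasurableSet T ∧ μ T ≤ c with hAdm
  have hctop : c ≠ ⊤ := fun h => hfin (top_le_iff.1 (h ▸ hc))
  -- one greedy step
  have step : ∀ (n : ℕ) (T : Set Ω), Adm T →
      ∃ U, (Adm U ∧ T ⊆ U) ∧ ∀ V, Adm V → T ⊆ V → μ V ≤ μ U + 1 / (n + 1) := by
    intro n T hT
    set s : ℝ≥0∞ := ⨆ (U : Set Ω) (_ : Adm U ∧ T ⊆ U), μ U with hs
    have hle : ∀ V, Adm V → T ⊆ V → μ V ≤ s := by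
      intro V hV hTV
      exact le_iSup₂ (f := fun (U : Set Ω) (_ : Adm U ∧ T ⊆ U) => μ U) V ⟨hV, hTV⟩
    have hstop : s ≠ ⊤ := by
      have : s ≤ c := by
        apply iSup₂_le
        intro U hU
        exact hU.1.2.2
      exact fun h => hctop (top_le_iff.1 (h ▸ this))
    rcases eq_or_ne s 0 with h0 | h0
    · refine ⟨T, ⟨hT, subset_rfl⟩, fun V hV hTV => ?_⟩
      calc μ V ≤ s := hle V hV hTV
      _ = 0 := h0
      _ ≤ _ := zero_le
    · have hsub : s - 1 / (n + 1) < s :=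
        ENNReal.sub_lt_self hstop h0 (by
          rw [one_div]
          exact ENNReal.inv_ne_zero.2 (by exact ENNReal.add_ne_top.2 ⟨ENNReal.natCast_ne_top n, ENNReal.one_ne_top⟩))
      rw [hs, lt_iSup_iff] at hsub
      obtain ⟨U, hU⟩ := hsub
      rw [lt_iSup_iff] at hU
      obtain ⟨⟨hUadm, hTU⟩, hUlt⟩ := hU
      refine ⟨U, ⟨hUadm, hTU⟩, fun V hV hTV => ?_⟩
      calc μ V ≤ s := hle V hV hTV
      _ ≤ s - 1 / (n + 1) + 1 / (n + 1) := le_tsub_add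
      _ ≤ μ U + 1 / (n + 1) := add_le_add_left hUlt.le _
  choose! next hnext hbd using step
  set seq : ℕ → Set Ω := fun n => Nat.rec ∅ (fun k T => next k T) n with hseq
  have hseq0 : seq 0 = ∅ := rfl
  have hseqS : ∀ n, seq (n + 1) = next n (seq n) := fun n => rfl
  have hadm : ∀ n, Adm (seq n) := by
    intro n
    induction n with
    | zero => rw [hseq0]; exact ⟨Set.empty_subset S, MeasurableSet.empty, by simp⟩
    | succ n ih => rw [hseqS]; exact (hnext n (seq n) ih).1
  have hmono : Monotone seq := by
    apply monotone_nat_of_le_succ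
    intro n
    rw [hseqS]
    exact (hnext n (seq n) (hadm n)).2
  set W : Set Ω := ⋃ n, seq n with hW
  have hWS : W ⊆ S := Set.iUnion_subset fun n => (hadm n).1
  have hWm : MeasurableSet W := MeasurableSet.iUnion fun n => (hadm n).2.1
  have hWμ : μ W = ⨆ n, μ (seq n) := Directed.measure_iUnion hmono.directed_le
  have hWc : μ W ≤ c := by
    rw [hWμ]; exact iSup_le fun n => (hadm n).2.2
  refine ⟨W, hWS, hWm, ?_⟩
  by_contra hne
  have hlt : μ W < c := lt_of_le_of_ne hWc hne
  have hWtop : μ W ≠ ⊤ := fun h => hctop (top_le_iff.1 (h ▸ hWc))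
  -- the remainder has positive measure
  have hrem : 0 < μ (S \ W) := by
    have : μ (S \ W) = μ S - μ W := measure_diff hWS hWm.nullMeasurableSet hWtop
    rw [this]
    exact tsub_pos_of_lt (lt_of_lt_of_le hlt hc)
  obtain ⟨X, hXsub, hXm, hX0, hXle⟩ := atomless_small hμ (hS.diff hWm) hrem
    (lt_of_le_of_lt (measure_mono Set.diff_subset) (lt_top_iff_ne_top.2 hfin))
    (tsub_pos_of_lt hlt)
  -- X disjoint from W, small
  have hdisj : Disjoint W X := Set.disjoint_of_subset_right hXsub Set.disjoint_sdiff_right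
  have hWX : μ (W ∪ X) = μ W + μ X := measure_union hdisj hXm
  have hadmWX : Adm (W ∪ X) := by
    refine ⟨Set.union_subset hWS (hXsub.trans Set.diff_subset), hWm.union hXm, ?_⟩
    rw [hWX]
    calc μ W + μ X ≤ μ W + (c - μ W) := add_le_add_right hXle _
    _ = c := add_tsub_cancel_of_le hlt.le
  -- for every n, μ (W ∪ X) ≤ μ (seq (n+1)) + 1/(n+1)
  have hbound : ∀ n : ℕ, μ X ≤ 1 / (n + 1) := by
    intro n
    have h1 : μ (W ∪ X) ≤ μ (seq (n + 1)) + 1 / (n + 1) := by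
      have := hbd n (seq n) (hadm n) (W ∪ X) hadmWX
        ((Set.subset_iUnion seq n).trans Set.subset_union_left)
      rwa [hseqS]
    have h2 : μ (seq (n + 1)) ≤ μ W := measure_mono (Set.subset_iUnion seq (n + 1))
    have h3 : μ W + μ X ≤ μ W + 1 / (n + 1) := by
      calc μ W + μ X = μ (W ∪ X) := hWX.symm
      _ ≤ μ (seq (n + 1)) + 1 / (n + 1) := h1
      _ ≤ μ W + 1 / (n + 1) := add_le_add_left h2 _
    exact (ENNReal.add_le_add_iff_left hWtop).1 h3
  obtain ⟨n, hn⟩ := ENNReal.exists_inv_nat_lt hX0.ne'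
  have : μ X ≤ 1 / (n + 1) := hbound n
  have hlt2 : (1 : ℝ≥0∞) / (n + 1) ≤ (n : ℝ≥0∞)⁻¹ := by
    rw [one_div]
    exact ENNReal.inv_le_inv.2 (by exact_mod_cast Nat.le_succ n)
  exact absurd (this.trans hlt2) (not_le.2 hn)

lemma integral_helper {Ω : Type*} [MeasurableSpace Ω] {μ : Measure Ω}
    (g : SimpleFunc Ω ℝ) (hg : Integrable g μ) {B : Set Ω} (hB : MeasurableSet B)
    {r : ℝ} (hr : 0 ≤ r)
    (h : ∀ c : ℝ, c ≠ 0 → μ (B ∩ g ⁻¹' {c}) = ENNReal.ofReal r * μ (g ⁻¹' {c})) :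
    ∫ ω in B, g ω ∂μ = r * ∫ ω, g ω ∂μ := by
  rw [← SimpleFunc.integral_eq_integral g hg, ← SimpleFunc.integral_eq_integral g hg.restrict,
    SimpleFunc.integral_eq, SimpleFunc.integral_eq, Finset.mul_sum]
  refine Finset.sum_congr rfl fun c _ => ?_
  rcases eq_or_ne c 0 with rfl | hc0
  · simp
  · rw [measureReal_def, measureReal_def, Measure.restrict_apply (g.measurableSet_preimage _), Set.inter_comm,
      h c hc0, ENNReal.toReal_mul, ENNReal.toReal_ofReal hr, smul_eq_mul, smul_eq_mul]
    ring

/-- Let `(Ω, Σ, μ)` be an atomless measure space and `f_1, …, f_n` integrable simple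
functions. Then for every `λ ∈ [0,1]` there is a measurable partition `Ω = A ⊔ B`
(`B = Aᶜ`) with `∫_A f_j = λ ∫ f_j` and `∫_B f_j = (1-λ) ∫ f_j` for all `j`. -/
theorem stmt5 {Ω : Type*} [MeasurableSpace Ω] (μ : Measure Ω)
    (hμ : MeasureAtomless μ) (n : ℕ) (f : Fin n → SimpleFunc Ω ℝ)
    (hf : ∀ j, Integrable (f j) μ) (lam : ℝ) (hlam : lam ∈ Set.Icc (0 : ℝ) 1) :
    ∃ A : Set Ω, MeasurableSet A ∧
      (∀ j, ∫ ω in A, f j ω ∂μ = lam * ∫ ω, f j ω ∂μ) ∧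
      (∀ j, ∫ ω in Aᶜ, f j ω ∂μ = (1 - lam) * ∫ ω, f j ω ∂μ) := by
  classical
  obtain ⟨hlam0, hlam1⟩ := hlam
  set t : ℝ≥0∞ := ENNReal.ofReal lam with ht
  set P : (Fin n → ℝ) → Set Ω := fun v => ⋂ j, (f j) ⁻¹' {v j} with hP
  have hPmeas : ∀ v, MeasurableSet (P v) := fun v =>
    MeasurableSet.iInter fun j => (f j).measurableSet_preimage _
  have hPdisj : ∀ v w, v ≠ w → Disjoint (P v) (P w) := by
    intro v w hvw
    rw [Set.disjoint_left]
    intro ω hv hw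
    apply hvw; funext j
    have h1 : f j ω = v j := by simpa using Set.mem_iInter.1 hv j
    have h2 : f j ω = w j := by simpa using Set.mem_iInter.1 hw j
    rw [← h1, h2]
  have hmemP : ∀ ω : Ω, ω ∈ P (fun j => f j ω) := fun ω =>
    Set.mem_iInter.2 fun j => rfl
  set V : Finset (Fin n → ℝ) := Fintype.piFinset fun j => (f j).range with hV
  have hVmem : ∀ ω : Ω, (fun j => f j ω) ∈ V := fun ω =>
    Fintype.mem_piFinset.2 fun j => (f j).mem_range_self ω
  have hPfin : ∀ v : Fin n → ℝ, v ≠ 0 → μ (P v) < ⊤ := by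
    intro v hv
    obtain ⟨j, hj⟩ := Function.ne_iff.1 hv
    refine lt_of_le_of_lt (measure_mono (Set.iInter_subset _ j))
      ((f j).measure_preimage_lt_top_of_integrable (hf j) hj)
  have key : ∀ v : Fin n → ℝ, v ≠ 0 →
      ∃ T, T ⊆ P v ∧ MeasurableSet T ∧ μ T = t * μ (P v) := by
    intro v hv
    have hle : t * μ (P v) ≤ μ (P v) := by
      calc t * μ (P v) ≤ 1 * μ (P v) :=
        mul_le_mul_left (by simpa [ht] using ENNReal.ofReal_le_one.2 hlam1) _
      _ = μ (P v) := one_mul _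
    exact atomless_sierpinski hμ (hPmeas v) (hPfin v hv).ne hle
  choose! T hTsub hTmeas hTμ using key
  set Q : (Fin n → ℝ) → Set Ω := fun v => if v = 0 then P v else T v with hQ
  have hQsub : ∀ v, Q v ⊆ P v := by
    intro v; rw [hQ]; dsimp only
    split_ifs with h
    · exact subset_rfl
    · exact hTsub v h
  have hQmeas : ∀ v, MeasurableSet (Q v) := by
    intro v; rw [hQ]; dsimp only
    split_ifs with h
    · exact hPmeas v
    · exact hTmeas v h
  set A : Set Ω := ⋃ v ∈ V, Q v with hA
  have hAmeas : MeasurableSet A :=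
    MeasurableSet.biUnion V.countable_toSet fun v _ => hQmeas v
  -- A ∩ P v = Q v for v ∈ V
  have hAP : ∀ v ∈ V, A ∩ P v = Q v := by
    intro v hv
    apply Set.Subset.antisymm
    · rintro x ⟨hxA, hxP⟩
      rw [hA] at hxA
      obtain ⟨w, hwV, hxQ⟩ := by simpa using hxA
      have hxPw : x ∈ P w := hQsub w hxQ
      rcases eq_or_ne w v with rfl | hwv
      · exact hxQ
      · exact absurd rfl ((hPdisj w v hwv).ne_of_mem hxPw hxP)
    · intro x hx
      exact ⟨Set.mem_biUnion hv hx, hQsub v hx⟩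
  -- level set decomposition
  have hlvl : ∀ (j : Fin n) (c : ℝ),
      (f j) ⁻¹' {c} = ⋃ v ∈ V.filter (fun v => v j = c), P v := by
    intro j c
    apply Set.Subset.antisymm
    · intro ω hω
      have : f j ω = c := hω
      exact Set.mem_biUnion (Finset.mem_filter.2 ⟨hVmem ω, this⟩) (hmemP ω)
    · rintro ω hω
      obtain ⟨v, hv, hωP⟩ := by simpa using hω
      have : f j ω = v j := by simpa using Set.mem_iInter.1 hωP j
      simpa [Set.mem_preimage, this] using hv.2
  -- measure of B ∩ level set, decomposed
  have hdecomp : ∀ (B : Set Ω), MeasurableSet B → ∀ (j : Fin n) (c : ℝ),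
      μ (B ∩ (f j) ⁻¹' {c}) = ∑ v ∈ V.filter (fun v => v j = c), μ (B ∩ P v) := by
    intro B hB j c
    rw [hlvl j c, Set.inter_iUnion₂]
    rw [measure_biUnion_finset]
    · intro v hv w hw hvw
      exact (hPdisj v w hvw).mono Set.inter_subset_right Set.inter_subset_right
    · exact fun v _ => hB.inter (hPmeas v)
  have hlvlμ : ∀ (j : Fin n) (c : ℝ),
      μ ((f j) ⁻¹' {c}) = ∑ v ∈ V.filter (fun v => v j = c), μ (P v) := by
    intro j c
    rw [hlvl j c, measure_biUnion_finset]
    · intro v hv w hw hvw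
      exact hPdisj v w hvw
    · exact fun v _ => hPmeas v
  have hne0 : ∀ (j : Fin n) (c : ℝ), c ≠ 0 → ∀ v ∈ V.filter (fun v => v j = c), v ≠ 0 := by
    intro j c hc v hv h0
    rw [Finset.mem_filter] at hv
    exact hc (by rw [← hv.2, h0]; rfl)
  have hQT : ∀ v : Fin n → ℝ, v ≠ 0 → Q v = T v := by
    intro v hv; rw [hQ]; simp [hv]
  -- measure identities for A
  have hAc : ∀ (j : Fin n) (c : ℝ), c ≠ 0 →
      μ (A ∩ (f j) ⁻¹' {c}) = t * μ ((f j) ⁻¹' {c}) := by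
    intro j c hc
    rw [hdecomp A hAmeas j c, hlvlμ j c, Finset.mul_sum]
    refine Finset.sum_congr rfl fun v hv => ?_
    have hv0 : v ≠ 0 := hne0 j c hc v hv
    rw [hAP v (Finset.mem_filter.1 hv).1, hQT v hv0, hTμ v hv0]
  -- measure identities for Aᶜ
  have hAcc : ∀ (j : Fin n) (c : ℝ), c ≠ 0 →
      μ (Aᶜ ∩ (f j) ⁻¹' {c}) = ENNReal.ofReal (1 - lam) * μ ((f j) ⁻¹' {c}) := by
    intro j c hc
    rw [hdecomp Aᶜ hAmeas.compl j c, hlvlμ j c, Finset.mul_sum]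
    refine Finset.sum_congr rfl fun v hv => ?_
    have hv0 : v ≠ 0 := hne0 j c hc v hv
    have hvV : v ∈ V := (Finset.mem_filter.1 hv).1
    have hset : Aᶜ ∩ P v = P v \ Q v := by
      rw [← hAP v hvV]
      ext x
      simp only [Set.mem_inter_iff, Set.mem_compl_iff, Set.mem_diff]
      tauto
    have hQP : μ (Q v) ≤ μ (P v) := measure_mono (hQsub v)
    have hQtop : μ (Q v) ≠ ⊤ := fun h => (hPfin v hv0).ne (top_le_iff.1 (h ▸ hQP))
    rw [hset, measure_diff (hQsub v) (hQmeas v).nullMeasurableSet hQtop,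
      hQT v hv0, hTμ v hv0]
    refine ENNReal.sub_eq_of_eq_add
      (ENNReal.mul_ne_top ENNReal.ofReal_ne_top (hPfin v hv0).ne) ?_
    rw [← add_mul, ht, ← ENNReal.ofReal_add (by linarith) hlam0]
    norm_num
  refine ⟨A, hAmeas, fun j => ?_, fun j => ?_⟩
  · refine integral_helper (f j) (hf j) hAmeas hlam0 fun c hc => ?_
    rw [hAc j c hc, ht]
  · refine integral_helper (f j) (hf j) hAmeas.compl (by linarith) fun c hc => ?_
    exact hAcc j c hc
end

section
/- Let (Ω, Σ, μ) be a measure space, 1 < p < ∞, q = p/(p-1), and let A, B ∈ Σ be disjoint with 0 < μ(A), μ(B) < ∞. Define T₀ on L_p(μ) by T₀x = μ(A)^(-1/q) μ(B)^(-1/p) (∫_A x dμ) · 1_B. Then for every x ∈ L_p(μ) with ‖x‖_p = 1, one has ∫_Ω |x|^(p-1) |T₀x| dμ ≤ p^(-1/p) q^(-1/q). -/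
open MeasureTheory
open scoped ENNReal NNReal

lemma young_aux8 {p q s t : ℝ} (hpq : p.HolderConjugate q) (hs : 0 ≤ s) (ht : 0 ≤ t)
    (hst : s + t ≤ 1) : s ^ (1/p) * t ^ (1/q) ≤ p ^ (-(1/p)) * q ^ (-(1/q)) := by
  have hp0 : 0 < p := hpq.pos
  have hq0 : 0 < q := hpq.symm.pos
  have h1 : (p*s) ^ (1/p) * (q*t) ^ (1/q) ≤ 1 := by
    calc (p*s) ^ (1/p) * (q*t) ^ (1/q) ≤ (1/p) * (p*s) + (1/q) * (q*t) :=
          Real.geom_mean_le_arith_mean2_weighted (by positivity) (by positivity)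
            (by positivity) (by positivity)
            (by simpa [one_div] using hpq.inv_add_inv_eq_one)
      _ = s + t := by field_simp
      _ ≤ 1 := hst
  have hps : (p*s) ^ (1/p) = p ^ (1/p) * s ^ (1/p) := Real.mul_rpow hp0.le hs
  have hqt : (q*t) ^ (1/q) = q ^ (1/q) * t ^ (1/q) := Real.mul_rpow hq0.le ht
  have hpne : p ^ (1/p) ≠ 0 := by positivity
  have hqne : q ^ (1/q) ≠ 0 := by positivity
  have key : s ^ (1/p) * t ^ (1/q)
      = (p ^ (-(1/p)) * q ^ (-(1/q))) * ((p*s) ^ (1/p) * (q*t) ^ (1/q)) := by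
    rw [hps, hqt, Real.rpow_neg hp0.le, Real.rpow_neg hq0.le]
    field_simp
  rw [key]
  calc (p ^ (-(1/p)) * q ^ (-(1/q))) * ((p*s) ^ (1/p) * (q*t) ^ (1/q))
      ≤ (p ^ (-(1/p)) * q ^ (-(1/q))) * 1 := by
        apply mul_le_mul_of_nonneg_left h1; positivity
    _ = p ^ (-(1/p)) * q ^ (-(1/q)) := by ring

/-- For the operator `T₀ x = μ(A)^(-1/q) μ(B)^(-1/p) (∫_A x dμ) 1_B` on `L_p(μ)` and
every norm-one `x`, one has `∫ |x|^(p-1) |T₀ x| dμ ≤ p^(-1/p) q^(-1/q)`. -/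
theorem stmt8 {Ω : Type*} [MeasurableSpace Ω] (μ : Measure Ω)
    {𝕜 : Type*} [RCLike 𝕜]
    (p q : ℝ) (hp : 1 < p) (hq : q = p / (p - 1))
    [Fact (1 ≤ ENNReal.ofReal p)]
    (A B : Set Ω) (hA : MeasurableSet A) (hB : MeasurableSet B)
    (hAB : Disjoint A B) (hA0 : 0 < μ A) (hAfin : μ A < ⊤)
    (hB0 : 0 < μ B) (hBfin : μ B < ⊤)
    (x : Lp 𝕜 (ENNReal.ofReal p) μ) (hx : ‖x‖ = 1) :
    ∫ ω, ‖x ω‖ ^ (p - 1) *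
        ((μ A).toReal ^ (-(1 / q)) * (μ B).toReal ^ (-(1 / p)) *
          ‖∫ ω' in A, x ω' ∂μ‖ * B.indicator (fun _ => (1 : ℝ)) ω) ∂μ ≤
      p ^ (-(1 / p)) * q ^ (-(1 / q)) := by
  have hp0 : 0 < p := lt_trans one_pos hp
  have hpq : p.HolderConjugate q := (Real.holderConjugate_iff_eq_conjExponent hp).2 hq
  have hq0 : 0 < q := hpq.symm.pos
  have hPne : (ENNReal.ofReal p) ≠ 0 := by simp [ENNReal.ofReal_eq_zero, not_le, hp0]
  have hPtop : (ENNReal.ofReal p) ≠ ⊤ := ENNReal.ofReal_ne_top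
  have hPto : (ENNReal.ofReal p).toReal = p := ENNReal.toReal_ofReal hp0.le
  have hsn : eLpNorm x (ENNReal.ofReal p) μ = 1 := by
    rw [← ENNReal.toReal_eq_one_iff, ← Lp.norm_def]; exact hx
  have hN : ∫⁻ ω, (‖x ω‖₊ : ℝ≥0∞) ^ p ∂μ = 1 := by
    have h2 := eLpNorm_eq_lintegral_rpow_enorm_toReal (f := (x : Ω → 𝕜)) hPne hPtop (μ := μ)
    rw [hsn, hPto] at h2
    have h3 := congrArg (· ^ p) h2.symm
    simpa [← ENNReal.rpow_natCast, ← ENNReal.rpow_mul, one_div,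
      inv_mul_cancel₀ hp0.ne', ENNReal.one_rpow, enorm_eq_nnnorm] using h3
  set f : Ω → ℝ≥0∞ := fun ω => (‖x ω‖₊ : ℝ≥0∞) with hf_def
  have hfm : AEMeasurable f μ := (Lp.aestronglyMeasurable x).aemeasurable.enorm
  set S : ℝ≥0∞ := ∫⁻ ω in A, f ω ^ p ∂μ with hS_def
  set T : ℝ≥0∞ := ∫⁻ ω in B, f ω ^ p ∂μ with hT_def
  have hST : S + T ≤ 1 := by
    rw [hS_def, hT_def, ← lintegral_union hB hAB, ← hN]
    exact setLIntegral_le_lintegral _ _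
  have hS1 : S ≤ 1 := le_trans le_self_add hST
  have hT1 : T ≤ 1 := le_trans le_add_self hST
  have hHA : ∫⁻ ω in A, f ω ∂μ ≤ S ^ (1/p) * μ A ^ (1/q) := by
    have := ENNReal.lintegral_mul_le_Lp_mul_Lq (μ.restrict A) hpq hfm.restrict
      (aemeasurable_const (b := (1:ℝ≥0∞)))
    simpa [Measure.restrict_apply_univ, setLIntegral_one] using this
  have hpq1 : (p - 1) * q = p := by
    have : p - 1 ≠ 0 := by linarith
    rw [hq]; field_simp
  have hHB : ∫⁻ ω in B, f ω ^ (p-1) ∂μ ≤ T ^ (1/q) * μ B ^ (1/p) := by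
    have := ENNReal.lintegral_mul_le_Lp_mul_Lq (μ.restrict B) hpq.symm
      (hfm.restrict.pow (aemeasurable_const (b := (p-1:ℝ))))
      (aemeasurable_const (b := (1:ℝ≥0∞)))
    simpa [← ENNReal.rpow_mul, hpq1, Measure.restrict_apply_univ, setLIntegral_one] using this
  -- real-side abbreviations
  set a : ℝ := (μ A).toReal with ha_def
  set b : ℝ := (μ B).toReal with hb_def
  have ha0 : 0 < a := ENNReal.toReal_pos hA0.ne' hAfin.ne
  have hb0 : 0 < b := ENNReal.toReal_pos hB0.ne' hBfin.ne
  set sa : ℝ := S.toReal with hsa_def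
  set tb : ℝ := T.toReal with htb_def
  have hsa0 : 0 ≤ sa := ENNReal.toReal_nonneg
  have htb0 : 0 ≤ tb := ENNReal.toReal_nonneg
  have hSne : S ≠ ⊤ := ne_top_of_le_ne_top ENNReal.one_ne_top hS1
  have hTne : T ≠ ⊤ := ne_top_of_le_ne_top ENNReal.one_ne_top hT1
  have hsum : sa + tb ≤ 1 := by
    have h := ENNReal.toReal_mono ENNReal.one_ne_top hST
    rwa [ENNReal.toReal_add hSne hTne, ENNReal.toReal_one] at h
  -- bound the A-integral
  have hAne : S ^ (1/p) * μ A ^ (1/q) ≠ ⊤ :=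
    ENNReal.mul_ne_top (ENNReal.rpow_ne_top_of_nonneg (by positivity) hSne)
      (ENNReal.rpow_ne_top_of_nonneg (by positivity) hAfin.ne)
  have hIA : ‖∫ ω' in A, x ω' ∂μ‖ ≤ sa ^ (1/p) * a ^ (1/q) := by
    calc ‖∫ ω' in A, x ω' ∂μ‖ ≤ ∫ ω' in A, ‖x ω'‖ ∂μ := norm_integral_le_integral_norm _
      _ = (∫⁻ ω in A, f ω ∂μ).toReal := by
          rw [integral_eq_lintegral_of_nonneg_ae
            (Filter.Eventually.of_forall fun ω => norm_nonneg _)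
            (Lp.aestronglyMeasurable x).norm.restrict]
          congr 1
          apply lintegral_congr fun ω => ?_
          simp only [hf_def]
          rw [ofReal_norm, enorm_eq_nnnorm]
      _ ≤ (S ^ (1/p) * μ A ^ (1/q)).toReal := ENNReal.toReal_mono hAne hHA
      _ = sa ^ (1/p) * a ^ (1/q) := by
          rw [ENNReal.toReal_mul, ← ENNReal.toReal_rpow, ← ENNReal.toReal_rpow]
  -- bound the B-integral
  have hBne : T ^ (1/q) * μ B ^ (1/p) ≠ ⊤ :=
    ENNReal.mul_ne_top (ENNReal.rpow_ne_top_of_nonneg (by positivity) hTne)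
      (ENNReal.rpow_ne_top_of_nonneg (by positivity) hBfin.ne)
  have hIB : ∫ ω in B, ‖x ω‖ ^ (p-1) ∂μ ≤ tb ^ (1/q) * b ^ (1/p) := by
    calc ∫ ω in B, ‖x ω‖ ^ (p-1) ∂μ
        = (∫⁻ ω in B, f ω ^ (p-1) ∂μ).toReal := by
          rw [integral_eq_lintegral_of_nonneg_ae
            (Filter.Eventually.of_forall fun ω => Real.rpow_nonneg (norm_nonneg _) _)
            (((Lp.aestronglyMeasurable x).norm.aemeasurable.pow
              aemeasurable_const).aestronglyMeasurable.restrict)]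
          congr 1
          apply lintegral_congr fun ω => ?_
          simp only [hf_def]
          rw [← ENNReal.ofReal_rpow_of_nonneg (norm_nonneg _) (by linarith : (0:ℝ) ≤ p - 1),
            ofReal_norm, enorm_eq_nnnorm]
      _ ≤ (T ^ (1/q) * μ B ^ (1/p)).toReal := ENNReal.toReal_mono hBne hHB
      _ = tb ^ (1/q) * b ^ (1/p) := by
          rw [ENNReal.toReal_mul, ← ENNReal.toReal_rpow, ← ENNReal.toReal_rpow]
  -- rewrite the LHS integral
  set c : ℝ := a ^ (-(1/q)) * b ^ (-(1/p)) * ‖∫ ω' in A, x ω' ∂μ‖ with hc_def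
  have hc0 : 0 ≤ c := by positivity
  have hfun : ∀ ω, ‖x ω‖ ^ (p - 1) * (c * B.indicator (fun _ => (1:ℝ)) ω)
      = B.indicator (fun ω => ‖x ω‖ ^ (p-1) * c) ω := by
    intro ω
    by_cases hω : ω ∈ B <;> simp [hω]
  have hLHS : ∫ ω, ‖x ω‖ ^ (p - 1) * (c * B.indicator (fun _ => (1:ℝ)) ω) ∂μ
      = (∫ ω in B, ‖x ω‖ ^ (p-1) ∂μ) * c := by
    simp_rw [hfun]
    rw [integral_indicator hB, integral_mul_const]
  calc ∫ ω, ‖x ω‖ ^ (p - 1) * (c * B.indicator (fun _ => (1:ℝ)) ω) ∂μ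
      = (∫ ω in B, ‖x ω‖ ^ (p-1) ∂μ) * c := hLHS
    _ ≤ (tb ^ (1/q) * b ^ (1/p)) * (a ^ (-(1/q)) * b ^ (-(1/p)) * (sa ^ (1/p) * a ^ (1/q))) := by
        apply mul_le_mul hIB ?_ hc0 (by positivity)
        rw [hc_def]
        exact mul_le_mul_of_nonneg_left hIA (by positivity)
    _ = (sa ^ (1/p) * tb ^ (1/q)) * ((a ^ (1/q) * a ^ (-(1/q))) * (b ^ (1/p) * b ^ (-(1/p)))) := by
        ring
    _ = sa ^ (1/p) * tb ^ (1/q) := by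
        rw [← Real.rpow_add ha0, ← Real.rpow_add hb0]
        simp
    _ ≤ p ^ (-(1/p)) * q ^ (-(1/q)) := young_aux8 hpq hsa0 htb0 hsum
end

section
/- Let H be a real Hilbert space of dimension at least 2. Then the infimum of v(T) over all rank-one operators T on H with ‖T‖ = 1 equals 1/2, where v(T) = sup{ |⟨Tx, x⟩| : ‖x‖ = 1 }. -/
open scoped RealInnerProductSpace

lemma exists_orthonormal_pair {H : Type*} [NormedAddCommGroup H] [InnerProductSpace ℝ H]
    (hdim : 2 ≤ Module.rank ℝ H) :
    ∃ x₁ x₂ : H, ‖x₁‖ = 1 ∧ ‖x₂‖ = 1 ∧ ⟪x₁, x₂⟫ = 0 := by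
  have hnt : Nontrivial H :=
    rank_pos_iff_nontrivial.mp (lt_of_lt_of_le (by norm_num) hdim)
  obtain ⟨x, hx⟩ := exists_ne (0 : H)
  obtain ⟨y, hy⟩ := exists_linearIndependent_pair_of_one_lt_rank
    (lt_of_lt_of_le (by norm_num) hdim) hx
  set x₁ : H := ‖x‖⁻¹ • x with hx₁def
  have hxn : ‖x‖ ≠ 0 := norm_ne_zero_iff.mpr hx
  have hx₁ : ‖x₁‖ = 1 := by
    rw [hx₁def, norm_smul, norm_inv, norm_norm, inv_mul_cancel₀ hxn]
  set u : H := y - ⟪y, x₁⟫ • x₁ with hudef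
  have hu : u ≠ 0 := by
    intro h
    have h1 : y = ⟪y, x₁⟫ • x₁ := sub_eq_zero.mp h
    have hyx : y = (⟪y, x₁⟫ * ‖x‖⁻¹) • x := h1.trans (by rw [hx₁def, smul_smul])
    have := (LinearIndependent.pair_iff.mp hy) (⟪y, x₁⟫ * ‖x‖⁻¹) (-1) ?_
    · exact absurd this.2 (by norm_num)
    · rw [neg_one_smul, ← hyx, add_neg_cancel]
  have hun : ‖u‖ ≠ 0 := norm_ne_zero_iff.mpr hu
  refine ⟨x₁, ‖u‖⁻¹ • u, hx₁, ?_, ?_⟩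
  · rw [norm_smul, norm_inv, norm_norm, inv_mul_cancel₀ hun]
  · have hinner : ⟪x₁, u⟫ = 0 := by
      rw [hudef, inner_sub_right, real_inner_smul_right,
        real_inner_self_eq_norm_sq, hx₁, real_inner_comm]
      ring
    rw [real_inner_smul_right, hinner, mul_zero]

/-- For unit vectors, the value at the normalized sum/difference. -/
lemma val_at_combo {H : Type*} [NormedAddCommGroup H] [InnerProductSpace ℝ H]
    {x₁ x₂ : H} (h₁ : ‖x₁‖ = 1) (h₂ : ‖x₂‖ = 1) (ε : ℝ) (hε : ε = 1 ∨ ε = -1)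
    (hc : 0 ≤ ε * ⟪x₁, x₂⟫) :
    ∃ x : H, ‖x‖ = 1 ∧
      |(⟪x, x₁⟫ : ℝ) * (⟪x₂, x⟫ : ℝ)| = (1 + ε * ⟪x₁, x₂⟫) / 2 := by
  have hcomm : (⟪x₂, x₁⟫ : ℝ) = ⟪x₁, x₂⟫ := real_inner_comm x₁ x₂
  set v : H := x₁ + ε • x₂ with hvdef
  have hε2 : ε ^ 2 = 1 := by rcases hε with h | h <;> rw [h] <;> norm_num
  have hv2 : ‖v‖ ^ 2 = 2 + 2 * (ε * ⟪x₁, x₂⟫) := by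
    rw [← real_inner_self_eq_norm_sq, hvdef]
    simp only [inner_add_left, inner_add_right, real_inner_smul_left, real_inner_smul_right]
    simp only [real_inner_self_eq_norm_sq, h₁, h₂, hcomm]
    nlinarith
  have hvn : ‖v‖ ≠ 0 := by
    intro h
    rw [h] at hv2; nlinarith
  have hvpos : 0 < ‖v‖ := lt_of_le_of_ne (norm_nonneg v) (Ne.symm hvn)
  refine ⟨‖v‖⁻¹ • v, ?_, ?_⟩
  · rw [norm_smul, norm_inv, norm_norm, inv_mul_cancel₀ hvn]
  · have e1 : ⟪‖v‖⁻¹ • v, x₁⟫ = ‖v‖⁻¹ * (1 + ε * ⟪x₁, x₂⟫) := by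
      rw [real_inner_smul_left, hvdef]
      simp only [inner_add_left, real_inner_smul_left]
      simp only [real_inner_self_eq_norm_sq, h₁, hcomm]
      ring
    have e2 : ⟪x₂, ‖v‖⁻¹ • v⟫ = ‖v‖⁻¹ * (ε * (1 + ε * ⟪x₁, x₂⟫)) := by
      rw [real_inner_smul_right, hvdef]
      simp only [inner_add_right, real_inner_smul_right]
      simp only [real_inner_self_eq_norm_sq, h₂, hcomm]
      have h3 : ε * (1 + ε * (⟪x₁, x₂⟫ : ℝ)) = ⟪x₁, x₂⟫ + ε * 1 ^ 2 := by
        rcases hε with h | h <;> rw [h] <;> ring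
      rw [h3]
    rw [e1, e2]
    have : ‖v‖⁻¹ * (1 + ε * ⟪x₁, x₂⟫) * (‖v‖⁻¹ * (ε * (1 + ε * ⟪x₁, x₂⟫)))
        = ε * ((1 + ε * ⟪x₁, x₂⟫) ^ 2 / ‖v‖ ^ 2) := by
      field_simp
    rw [this, hv2, abs_mul]
    have habs : |ε| = 1 := by rcases hε with h | h <;> rw [h] <;> norm_num
    rw [habs, one_mul, abs_of_nonneg (by positivity)]
    rw [div_eq_div_iff (by linarith) (by norm_num : (2:ℝ) ≠ 0)]
    ring

/-- For a real Hilbert space `H` with `dim H ≥ 2`, the rank-one numerical index equals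
`1/2`: the infimum of `v(T)` over norm-one rank-one operators `T x = ⟪x, x₁⟫ x₂`
(`‖x₁‖ = ‖x₂‖ = 1`) is `1/2`, where `v(T) = sup_{‖x‖=1} |⟨Tx, x⟩|`. -/
theorem stmt12 {H : Type*} [NormedAddCommGroup H] [InnerProductSpace ℝ H]
    [CompleteSpace H] (hdim : 2 ≤ Module.rank ℝ H) :
    sInf {r : ℝ | ∃ x₁ x₂ : H, ‖x₁‖ = 1 ∧ ‖x₂‖ = 1 ∧
        r = sSup {s : ℝ | ∃ x : H, ‖x‖ = 1 ∧
          s = |(inner ℝ x x₁ : ℝ) * (inner ℝ x₂ x : ℝ)|}} = 1 / 2 := by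
  -- the inner set is bounded above by 1
  have hbdd : ∀ x₁ x₂ : H, ‖x₁‖ = 1 → ‖x₂‖ = 1 →
      ∀ s ∈ {s : ℝ | ∃ x : H, ‖x‖ = 1 ∧
        s = |(inner ℝ x x₁ : ℝ) * (inner ℝ x₂ x : ℝ)|}, s ≤ 1 := by
    rintro x₁ x₂ h₁ h₂ s ⟨x, hx, rfl⟩
    rw [abs_mul]
    have c1 : |(inner ℝ x x₁ : ℝ)| ≤ 1 := by
      have := abs_real_inner_le_norm x x₁; rwa [hx, h₁, one_mul] at this
    have c2 : |(inner ℝ x₂ x : ℝ)| ≤ 1 := by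
      have := abs_real_inner_le_norm x₂ x; rwa [hx, h₂, mul_one] at this
    calc |(inner ℝ x x₁ : ℝ)| * |(inner ℝ x₂ x : ℝ)| ≤ 1 * 1 :=
          mul_le_mul c1 c2 (abs_nonneg _) (by norm_num)
      _ = 1 := by norm_num
  -- lower bound: every element of the outer set is ≥ 1/2
  have hlb : ∀ r ∈ {r : ℝ | ∃ x₁ x₂ : H, ‖x₁‖ = 1 ∧ ‖x₂‖ = 1 ∧
      r = sSup {s : ℝ | ∃ x : H, ‖x‖ = 1 ∧
        s = |(inner ℝ x x₁ : ℝ) * (inner ℝ x₂ x : ℝ)|}}, (1:ℝ)/2 ≤ r := by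
    rintro r ⟨x₁, x₂, h₁, h₂, rfl⟩
    have hε : ∃ ε : ℝ, (ε = 1 ∨ ε = -1) ∧ 0 ≤ ε * ⟪x₁, x₂⟫ := by
      rcases le_or_gt 0 (⟪x₁, x₂⟫ : ℝ) with h | h
      · exact ⟨1, Or.inl rfl, by linarith⟩
      · exact ⟨-1, Or.inr rfl, by linarith⟩
    obtain ⟨ε, hε1, hε2⟩ := hε
    obtain ⟨x, hx, hval⟩ := val_at_combo h₁ h₂ ε hε1 hε2
    have hmem : (1 + ε * ⟪x₁, x₂⟫) / 2 ∈ {s : ℝ | ∃ x : H, ‖x‖ = 1 ∧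
        s = |(inner ℝ x x₁ : ℝ) * (inner ℝ x₂ x : ℝ)|} := ⟨x, hx, hval.symm⟩
    have hle : (1 + ε * ⟪x₁, x₂⟫) / 2 ≤ sSup {s : ℝ | ∃ x : H, ‖x‖ = 1 ∧
        s = |(inner ℝ x x₁ : ℝ) * (inner ℝ x₂ x : ℝ)|} :=
      le_csSup ⟨1, hbdd x₁ x₂ h₁ h₂⟩ hmem
    linarith
  -- membership: using an orthonormal pair, 1/2 is in the outer set
  obtain ⟨x₁, x₂, h₁, h₂, hortho⟩ := exists_orthonormal_pair hdim
  have hmem : (1:ℝ)/2 ∈ {r : ℝ | ∃ x₁ x₂ : H, ‖x₁‖ = 1 ∧ ‖x₂‖ = 1 ∧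
      r = sSup {s : ℝ | ∃ x : H, ‖x‖ = 1 ∧
        s = |(inner ℝ x x₁ : ℝ) * (inner ℝ x₂ x : ℝ)|}} := by
    refine ⟨x₁, x₂, h₁, h₂, ?_⟩
    obtain ⟨x, hx, hval⟩ := val_at_combo h₁ h₂ 1 (Or.inl rfl)
      (by rw [one_mul, hortho])
    rw [hortho] at hval
    have hval' : |(inner ℝ x x₁ : ℝ) * (inner ℝ x₂ x : ℝ)| = 1/2 := hval.trans (by norm_num)
    have hub : ∀ s ∈ {s : ℝ | ∃ x : H, ‖x‖ = 1 ∧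
        s = |(inner ℝ x x₁ : ℝ) * (inner ℝ x₂ x : ℝ)|}, s ≤ 1/2 := by
      rintro s ⟨y, hy, rfl⟩
      set a : ℝ := ⟪y, x₁⟫ with ha
      set b : ℝ := ⟪y, x₂⟫ with hb
      have key : (0:ℝ) ≤ 1 - a ^ 2 - b ^ 2 := by
        have h0 : (0:ℝ) ≤ ⟪y - a • x₁ - b • x₂, y - a • x₁ - b • x₂⟫ :=
          real_inner_self_nonneg
        have hexp : (⟪y - a • x₁ - b • x₂, y - a • x₁ - b • x₂⟫ : ℝ)
            = 1 - a ^ 2 - b ^ 2 := by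
          simp only [inner_sub_left, inner_sub_right, real_inner_smul_left,
            real_inner_smul_right]
          simp only [real_inner_self_eq_norm_sq, h₁, h₂, hy]
          rw [real_inner_comm y x₁, real_inner_comm y x₂, real_inner_comm x₁ x₂,
            ← ha, ← hb, hortho]
          ring
        linarith [hexp ▸ h0]
      have hcomm : (inner ℝ x₂ y : ℝ) = b := by rw [hb]; exact real_inner_comm y x₂
      rw [hcomm]
      rcases abs_cases (a * b) with ⟨heq, _⟩ | ⟨heq, _⟩ <;> rw [heq] <;>
        nlinarith [sq_nonneg (a - b), sq_nonneg (a + b)]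
    have hmem2 : (1:ℝ)/2 ∈ {s : ℝ | ∃ x : H, ‖x‖ = 1 ∧
        s = |(inner ℝ x x₁ : ℝ) * (inner ℝ x₂ x : ℝ)|} := ⟨x, hx, hval'.symm⟩
    exact (le_antisymm (csSup_le ⟨_, hmem2⟩ hub)
      (le_csSup ⟨1, hbdd x₁ x₂ h₁ h₂⟩ hmem2)).symm
  exact le_antisymm (csInf_le ⟨1/2, hlb⟩ hmem) (le_csInf ⟨_, hmem⟩ hlb)
end

section
/- Let H be a real Hilbert space, x₁, x₂ ∈ H unit vectors with |⟨x₁, x₂⟩| < 1, and Tx = ⟨x, x₁⟩ x₂. Then there exists a unit vector x ∈ H with ⟨x, x⟩ = 1 such that |⟨Tx, x⟩| ≥ 1/2. -/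
lemma stmt14_aux {H : Type*} [NormedAddCommGroup H] [InnerProductSpace ℝ H]
    (x₁ x₂ : H) (hx₁ : ‖x₁‖ = 1) (hx₂ : ‖x₂‖ = 1)
    (ht : 0 ≤ (inner ℝ x₁ x₂ : ℝ)) :
    ∃ x : H, ‖x‖ = 1 ∧ (1 : ℝ) / 2 ≤ |(inner ℝ ((inner ℝ x x₁ : ℝ) • x₂) x : ℝ)| := by
  set t : ℝ := inner ℝ x₁ x₂ with htdef
  set v : H := x₁ + x₂ with hvdef
  have hv2 : ‖v‖ ^ 2 = 2 + 2 * t := by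
    rw [hvdef, norm_add_sq_real, hx₁, hx₂, ← htdef]; ring
  have hvpos : 0 < ‖v‖ := by
    nlinarith [norm_nonneg v]
  refine ⟨‖v‖⁻¹ • v, ?_, ?_⟩
  · rw [norm_smul, norm_inv, norm_norm, inv_mul_cancel₀ hvpos.ne']
  · have h11 : (inner ℝ x₁ x₁ : ℝ) = 1 := by
      rw [real_inner_self_eq_norm_sq, hx₁]; norm_num
    have h22 : (inner ℝ x₂ x₂ : ℝ) = 1 := by
      rw [real_inner_self_eq_norm_sq, hx₂]; norm_num
    have h21 : (inner ℝ x₂ x₁ : ℝ) = t := by rw [real_inner_comm, ← htdef]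
    have hA : (inner ℝ (‖v‖⁻¹ • v) x₁ : ℝ) = ‖v‖⁻¹ * (1 + t) := by
      rw [real_inner_smul_left, hvdef, inner_add_left, h11, h21]
    have hB : (inner ℝ x₂ (‖v‖⁻¹ • v) : ℝ) = ‖v‖⁻¹ * (t + 1) := by
      rw [real_inner_smul_right, hvdef, inner_add_right, h22, h21]
    rw [real_inner_smul_left, hA, hB]
    have key : ‖v‖⁻¹ * (1 + t) * (‖v‖⁻¹ * (t + 1)) = (1 + t) / 2 := by
      have : ‖v‖⁻¹ * ‖v‖⁻¹ = (2 + 2 * t)⁻¹ := by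
        rw [← mul_inv]
        congr 1
        nlinarith
      field_simp at this ⊢
      nlinarith [this]
    rw [key, abs_of_nonneg (by linarith : (0:ℝ) ≤ (1 + t) / 2)]
    linarith

/-- If `x₁, x₂` are unit vectors in a real Hilbert space with `|⟪x₁, x₂⟫| < 1` and
`T x = ⟪x, x₁⟫ x₂`, then there is a unit vector `x` with `|⟨Tx, x⟩| ≥ 1/2`. -/
theorem stmt14 {H : Type*} [NormedAddCommGroup H] [InnerProductSpace ℝ H]
    (x₁ x₂ : H) (hx₁ : ‖x₁‖ = 1) (hx₂ : ‖x₂‖ = 1)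
    (hip : |(inner ℝ x₁ x₂ : ℝ)| < 1) :
    ∃ x : H, ‖x‖ = 1 ∧ (1 : ℝ) / 2 ≤ |(inner ℝ ((inner ℝ x x₁ : ℝ) • x₂) x : ℝ)| := by
  rcases le_or_gt 0 (inner ℝ x₁ x₂ : ℝ) with ht | ht
  · exact stmt14_aux x₁ x₂ hx₁ hx₂ ht
  · obtain ⟨x, hx, hge⟩ := stmt14_aux x₁ (-x₂) hx₁ (by rw [norm_neg, hx₂])
      (by rw [inner_neg_right]; linarith)
    refine ⟨x, hx, ?_⟩
    have : (inner ℝ ((inner ℝ x x₁ : ℝ) • (-x₂)) x : ℝ) =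
        -(inner ℝ ((inner ℝ x x₁ : ℝ) • x₂) x : ℝ) := by
      rw [smul_neg, inner_neg_left]
    rw [this, abs_neg] at hge
    exact hge
end

section
/- Let (Ω, Σ, μ) be an atomless finite measure space, 1 ≤ p < ∞, T a narrow bounded linear operator on L_p(μ), x ∈ L_p(μ) a simple function with Tx = y, Ω = D₁ ⊔ ... ⊔ D_ℓ a measurable partition, and ε > 0. Then there exists a partition Ω = A ⊔ B such that (i) ‖x·1_A‖^p = ‖x·1_B‖^p = ‖x‖^p/2, (ii) μ(D_j ∩ A) = μ(D_j ∩ B) = μ(D_j)/2 for each j, and (iii) ‖T(x·1_A) - y/2‖ < ε and ‖T(x·1_B) - y/2‖ < ε. -/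
open MeasureTheory

variable {Ω : Type*} [MeasurableSpace Ω] {μ : Measure Ω} {pe : ENNReal} [Fact (1 ≤ pe)]

/-- An operator `T` on `L_p(μ)` is narrow if for every measurable `A` and `ε > 0` there
is `x ∈ L_p(μ)` with `x² = 1_A`, `∫ x dμ = 0` and `‖Tx‖ < ε`. -/
def IsNarrow (μ : Measure Ω) (pe : ENNReal) [Fact (1 ≤ pe)]
    (T : Lp ℝ pe μ →L[ℝ] Lp ℝ pe μ) : Prop :=
  ∀ A : Set Ω, MeasurableSet A → ∀ ε : ℝ, 0 < ε →
    ∃ x : Lp ℝ pe μ, (∀ᵐ ω ∂μ, (x ω) ^ 2 = A.indicator (fun _ => (1 : ℝ)) ω) ∧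
      (∫ ω, x ω ∂μ) = 0 ∧ ‖T x‖ < ε

/-- The restriction `x·1_A` of `x ∈ L_p(μ)` to a measurable set `A`, as an element of
`L_p(μ)`. -/
noncomputable def lpRestrict (x : Lp ℝ pe μ) {A : Set Ω} (hA : MeasurableSet A) :
    Lp ℝ pe μ :=
  MemLp.toLp (A.indicator x) ((Lp.memLp x).indicator hA)

open scoped ENNReal NNReal

set_option linter.unusedSectionVars false

lemma lp_coeFn_sum {ι : Type*} (f : ι → Lp ℝ pe μ) (S : Finset ι) :
    ⇑(∑ k ∈ S, f k) =ᵐ[μ] fun ω => ∑ k ∈ S, f k ω := by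
  classical
  induction S using Finset.induction with
  | empty => simp; exact Lp.coeFn_zero (E := ℝ) (p := pe) (μ := μ)
  | @insert a s hnot ih =>
      rw [Finset.sum_insert hnot]
      filter_upwards [Lp.coeFn_add (f a) (∑ k ∈ s, f k), ih] with ω h1 h2
      simp only [Finset.sum_insert hnot, h1, Pi.add_apply, h2]

lemma narrow_split [IsFiniteMeasure μ] (T : Lp ℝ pe μ →L[ℝ] Lp ℝ pe μ)
    (hT : IsNarrow μ pe T) (E : Set Ω) (hE : MeasurableSet E) (δ : ℝ) (hδ : 0 < δ) :
    ∃ P : Set Ω, MeasurableSet P ∧ P ⊆ E ∧ μ P = μ E / 2 ∧ μ (E \ P) = μ E / 2 ∧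
      ∃ g : Lp ℝ pe μ,
        ((g : Ω → ℝ) =ᵐ[μ] fun ω =>
          P.indicator (fun _ => (1:ℝ)) ω - (E \ P).indicator (fun _ => (1:ℝ)) ω) ∧
        ‖T g‖ < δ := by
  obtain ⟨g, hg2, hgint, hgT⟩ := hT E hE δ hδ
  set f := (Lp.aestronglyMeasurable g).mk g with hf
  have hfg : (g : Ω → ℝ) =ᵐ[μ] f := (Lp.aestronglyMeasurable g).ae_eq_mk
  have hfmeas : Measurable f := (Lp.aestronglyMeasurable g).stronglyMeasurable_mk.measurable
  set P := E ∩ {ω | 0 < f ω} with hP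
  have hPmeas : MeasurableSet P := hE.inter (measurableSet_lt measurable_const hfmeas)
  have hPE : P ⊆ E := Set.inter_subset_left
  have heq : (g : Ω → ℝ) =ᵐ[μ] fun ω =>
      P.indicator (fun _ => (1:ℝ)) ω - (E \ P).indicator (fun _ => (1:ℝ)) ω := by
    filter_upwards [hg2, hfg] with ω h2 hfω
    by_cases hω : ω ∈ E
    · rw [Set.indicator_of_mem hω] at h2
      have hcase : g ω = 1 ∨ g ω = -1 := by
        have h0 : (g ω - 1) * (g ω + 1) = 0 := by nlinarith [h2]
        rcases mul_eq_zero.mp h0 with h | h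
        · left; linarith
        · right; linarith
      by_cases hωP : ω ∈ P
      · have : 0 < f ω := hωP.2
        have hg1 : g ω = 1 := by
          rcases hcase with h | h
          · exact h
          · rw [hfω] at h; simp [h] at this; linarith
        rw [Set.indicator_of_mem hωP, Set.indicator_of_notMem (fun h => h.2 hωP)]
        simpa using hg1
      · have hle : ¬ (0 < f ω) := fun h => hωP ⟨hω, h⟩
        have hg1 : g ω = -1 := by
          rcases hcase with h | h
          · exfalso; rw [hfω] at h; exact hle (by simp [h])
          · exact h
        rw [Set.indicator_of_notMem hωP, Set.indicator_of_mem (show ω ∈ E \ P from ⟨hω, hωP⟩)]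
        simpa using hg1
    · rw [Set.indicator_of_notMem hω] at h2
      have hg0 : g ω = 0 := by nlinarith [h2, sq_nonneg (g ω)]
      rw [Set.indicator_of_notMem (fun h => hω (hPE h)),
        Set.indicator_of_notMem (fun h : ω ∈ E \ P => hω h.1)]
      simpa using hg0
  have hint : ∫ ω, g ω ∂μ = (μ P).toReal - (μ (E \ P)).toReal := by
    rw [integral_congr_ae heq]
    rw [integral_sub ((integrable_const (1:ℝ)).indicator hPmeas)
      ((integrable_const (1:ℝ)).indicator (hE.diff hPmeas))]
    rw [show (fun _ : Ω => (1:ℝ)) = (1 : Ω → ℝ) from rfl]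
    rw [integral_indicator_one hPmeas, integral_indicator_one (hE.diff hPmeas), measureReal_def, measureReal_def]
  have hPeq : μ P = μ (E \ P) := by
    apply (ENNReal.toReal_eq_toReal_iff' (measure_ne_top μ _) (measure_ne_top μ _)).mp
    rw [hgint] at hint
    linarith
  have hEsum : μ P + μ (E \ P) = μ E := by
    have := measure_inter_add_diff (μ := μ) E hPmeas
    rwa [Set.inter_eq_self_of_subset_right hPE] at this
  have hhalf : μ P = μ E / 2 := by
    rw [← hEsum, ← hPeq, ← two_mul, mul_comm, mul_div_assoc, ENNReal.div_self (by norm_num) (by norm_num), mul_one]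
  exact ⟨P, hPmeas, hPE, hhalf, by rw [← hPeq]; exact hhalf, g, heq, hgT⟩

set_option maxHeartbeats 1000000 in
/-- Lemma on halving: for a narrow `T` on `L_p(μ)` over an atomless finite measure, a
simple `x` with `Tx = y`, a finite measurable partition `Ω = D₁ ⊔ … ⊔ D_ℓ` and `ε > 0`,
there is a partition `Ω = A ⊔ Aᶜ` with (i) `‖x1_A‖^p = ‖x1_{Aᶜ}‖^p = ‖x‖^p/2`,
(ii) `μ(D_j ∩ A) = μ(D_j ∩ Aᶜ) = μ(D_j)/2`, (iii) `‖T(x1_A) - y/2‖ < ε` and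
`‖T(x1_{Aᶜ}) - y/2‖ < ε`. -/
theorem stmt15 [IsFiniteMeasure μ]
    (hμ : ∀ A : Set Ω, MeasurableSet A → 0 < μ A →
      ∃ B ⊆ A, MeasurableSet B ∧ 0 < μ B ∧ μ B < μ A)
    (p : ℝ) (hp : 1 ≤ p) (hpe : pe = ENNReal.ofReal p)
    (T : Lp ℝ pe μ →L[ℝ] Lp ℝ pe μ) (hT : IsNarrow μ pe T)
    (x : Lp ℝ pe μ) (s : SimpleFunc Ω ℝ) (hxs : (x : Ω → ℝ) =ᵐ[μ] s)
    (y : Lp ℝ pe μ) (hy : T x = y)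
    (ℓ : ℕ) (D : Fin ℓ → Set Ω) (hD : ∀ j, MeasurableSet (D j))
    (hDdisj : Pairwise (Function.onFun Disjoint D)) (hDcov : (⋃ j, D j) = Set.univ)
    (ε : ℝ) (hε : 0 < ε) :
    ∃ A : Set Ω, ∃ hA : MeasurableSet A,
      ‖lpRestrict x hA‖ ^ p = ‖x‖ ^ p / 2 ∧
      ‖lpRestrict x hA.compl‖ ^ p = ‖x‖ ^ p / 2 ∧
      (∀ j, μ (D j ∩ A) = μ (D j) / 2 ∧ μ (D j ∩ Aᶜ) = μ (D j) / 2) ∧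
      ‖T (lpRestrict x hA) - (2 : ℝ)⁻¹ • y‖ < ε ∧
      ‖T (lpRestrict x hA.compl) - (2 : ℝ)⁻¹ • y‖ < ε := by
  classical
  have hp0 : (0:ℝ) < p := lt_of_lt_of_le one_pos hp
  have hpe0 : pe ≠ 0 := by rw [hpe]; simpa [ENNReal.ofReal_eq_zero] using hp0
  have hpeT : pe ≠ ⊤ := by rw [hpe]; exact ENNReal.ofReal_ne_top
  have hper : pe.toReal = p := by rw [hpe, ENNReal.toReal_ofReal hp0.le]
  -- the refined partition
  set S : Finset (ℝ × Fin ℓ) := s.range ×ˢ Finset.univ with hS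
  set E : ℝ × Fin ℓ → Set Ω := fun k => s ⁻¹' {k.1} ∩ D k.2 with hE
  have hEmeas : ∀ k, MeasurableSet (E k) := fun k =>
    (s.measurableSet_fiber k.1).inter (hD k.2)
  have hEuniq : ∀ ω : Ω, ∀ k m : ℝ × Fin ℓ, ω ∈ E k → ω ∈ E m → k = m := by
    intro ω k m hk hm
    have h1 : k.1 = m.1 := by
      have := hk.1; have := hm.1
      simp only [hE, Set.mem_preimage, Set.mem_singleton_iff] at *
      rw [← hk.1, ← hm.1]
    have h2 : k.2 = m.2 := by
      by_contra hne
      exact Set.disjoint_left.mp (hDdisj hne) hk.2 hm.2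
    exact Prod.ext h1 h2
  have hEdisj : (S : Set (ℝ × Fin ℓ)).PairwiseDisjoint E := by
    intro k _ m _ hne
    rw [Function.onFun, Set.disjoint_left]
    intro ω hk hm
    exact hne (hEuniq ω k m hk hm)
  have hEcov : ∀ ω : Ω, ∃ k ∈ S, ω ∈ E k := by
    intro ω
    have : ω ∈ ⋃ j, D j := hDcov ▸ Set.mem_univ ω
    obtain ⟨j, hj⟩ := Set.mem_iUnion.mp this
    exact ⟨(s ω, j), by simp [hS, SimpleFunc.mem_range_self], ⟨rfl, hj⟩⟩
  -- choose halves via narrowness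
  set C : ℝ := ∑ k ∈ S, |k.1| with hC
  have hC0 : 0 ≤ C := Finset.sum_nonneg fun k _ => abs_nonneg _
  set δ : ℝ := ε / (1 + C) with hδdef
  have hδ : 0 < δ := div_pos hε (by linarith)
  have H : ∀ k : ℝ × Fin ℓ, ∃ P : Set Ω, MeasurableSet P ∧ P ⊆ E k ∧
      μ P = μ (E k) / 2 ∧ μ (E k \ P) = μ (E k) / 2 ∧
      ∃ g : Lp ℝ pe μ,
        ((g : Ω → ℝ) =ᵐ[μ] fun ω =>
          P.indicator (fun _ => (1:ℝ)) ω - (E k \ P).indicator (fun _ => (1:ℝ)) ω) ∧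
        ‖T g‖ < δ := fun k => narrow_split T hT (E k) (hEmeas k) δ hδ
  choose P hPmeas hPsub hPhalf hPhalf' g hg hgT using H
  set A : Set Ω := ⋃ k ∈ S, P k with hAdef
  have hA : MeasurableSet A :=
    MeasurableSet.biUnion S.countable_toSet fun k _ => hPmeas k
  have hmemA : ∀ ω, ω ∈ A ↔ ∃ k ∈ S, ω ∈ P k := by
    intro ω; simp [hAdef]
  have hAE : ∀ k ∈ S, E k ∩ A = P k := by
    intro k hk
    ext ω
    constructor
    · rintro ⟨hEk, hA'⟩
      obtain ⟨m, hmS, hPm⟩ := (hmemA ω).mp hA'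
      have : k = m := hEuniq ω k m hEk (hPsub m hPm)
      rwa [this]
    · intro hω
      exact ⟨hPsub k hω, (hmemA ω).mpr ⟨k, hk, hω⟩⟩
  have hAEc : ∀ k ∈ S, E k ∩ Aᶜ = E k \ P k := by
    intro k hk
    rw [← Set.diff_eq, ← hAE k hk, Set.diff_self_inter]
  -- measure halving of the D j
  have hDj : ∀ j, D j = ⋃ c ∈ s.range, E (c, j) := by
    intro j; ext ω
    simp only [Set.mem_iUnion, hE, Set.mem_inter_iff, Set.mem_preimage,
      Set.mem_singleton_iff]
    constructor
    · intro h; exact ⟨s ω, SimpleFunc.mem_range_self s ω, rfl, h⟩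
    · rintro ⟨c, _, _, h⟩; exact h
  have hmemS : ∀ (c : ℝ) (j : Fin ℓ), c ∈ s.range → (c, j) ∈ S := by
    intro c j hc; simp [hS, hc]
  have hPdisj : (↑S : Set (ℝ × Fin ℓ)).PairwiseDisjoint P := by
    intro k hk m hm hne
    exact (hEdisj hk hm hne).mono (hPsub k) (hPsub m)
  have key_half : ∀ j, μ (D j ∩ A) = μ (D j) / 2 := by
    intro j
    have h1 : D j ∩ A = ⋃ c ∈ s.range, P (c, j) := by
      rw [hDj j, Set.iUnion₂_inter]
      exact Set.iUnion₂_congr fun c hc => hAE (c, j) (hmemS c j hc)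
    have hd1 : (↑s.range : Set ℝ).PairwiseDisjoint (fun c => P (c, j)) := by
      intro c hc c' hc' hne
      exact hPdisj (by simpa using hmemS c j (by simpa using hc))
        (by simpa using hmemS c' j (by simpa using hc'))
        (by simp [Prod.ext_iff, hne])
    have hd2 : (↑s.range : Set ℝ).PairwiseDisjoint (fun c => E (c, j)) := by
      intro c hc c' hc' hne
      exact hEdisj (by simpa using hmemS c j (by simpa using hc))
        (by simpa using hmemS c' j (by simpa using hc'))
        (by simp [Prod.ext_iff, hne])
    rw [h1, measure_biUnion_finset hd1 (fun c _ => hPmeas _), hDj j,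
      measure_biUnion_finset hd2 (fun c _ => hEmeas _)]
    rw [div_eq_mul_inv, Finset.sum_mul]
    exact Finset.sum_congr rfl fun c _ => by rw [hPhalf (c, j), div_eq_mul_inv]
  have key_halfc : ∀ j, μ (D j ∩ Aᶜ) = μ (D j) / 2 := by
    intro j
    have h1 : D j ∩ Aᶜ = D j \ (D j ∩ A) := by rw [Set.diff_self_inter, Set.diff_eq]
    rw [h1, measure_diff Set.inter_subset_left ((hD j).inter hA).nullMeasurableSet
      (measure_ne_top μ _), key_half j, ENNReal.sub_half (measure_ne_top μ _)]
  -- lintegral computations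
  set F : Ω → ℝ≥0∞ := fun ω => (‖s ω‖₊ : ℝ≥0∞) ^ p with hF
  have hFE : ∀ (k : ℝ × Fin ℓ) (ω : Ω), ω ∈ E k → F ω = (‖k.1‖₊ : ℝ≥0∞) ^ p := by
    intro k ω hω
    have : s ω = k.1 := hω.1
    simp [hF, this]
  have hunivE : (⋃ k ∈ S, E k) = Set.univ := by
    apply Set.eq_univ_of_forall
    intro ω
    obtain ⟨k, hk, hEk⟩ := hEcov ω
    exact Set.mem_biUnion hk hEk
  have hAc : Aᶜ = ⋃ k ∈ S, (E k \ P k) := by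
    ext ω
    constructor
    · intro hω
      obtain ⟨k, hk, hEk⟩ := hEcov ω
      exact Set.mem_biUnion hk ⟨hEk, fun hP => hω ((hmemA ω).mpr ⟨k, hk, hP⟩)⟩
    · intro hω hA'
      simp only [Set.mem_iUnion] at hω
      obtain ⟨k, hk, hEk, hPk⟩ := hω
      obtain ⟨m, hm, hPm⟩ := (hmemA ω).mp hA'
      have hkm : k = m := hEuniq ω k m hEk (hPsub m hPm)
      exact hPk (hkm ▸ hPm)
  set I : ℝ≥0∞ := ∫⁻ ω, F ω ∂μ with hI
  have hIdec : I = ∑ k ∈ S, (‖k.1‖₊ : ℝ≥0∞) ^ p * μ (E k) := by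
    rw [hI, ← setLIntegral_univ, ← hunivE,
      lintegral_biUnion_finset hEdisj (fun k _ => hEmeas k)]
    exact Finset.sum_congr rfl fun k _ => by
      rw [setLIntegral_congr_fun (hEmeas k) (fun ω hω => hFE k ω hω),
        setLIntegral_const]
  have hIA : ∫⁻ ω in A, F ω ∂μ = I / 2 := by
    rw [hAdef, lintegral_biUnion_finset hPdisj (fun k _ => hPmeas k), hIdec,
      div_eq_mul_inv, Finset.sum_mul]
    exact Finset.sum_congr rfl fun k _ => by
      rw [setLIntegral_congr_fun (hPmeas k) (fun ω hω => hFE k ω (hPsub k hω)),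
        setLIntegral_const, hPhalf k, div_eq_mul_inv, mul_assoc]
  have hEPdisj : (↑S : Set (ℝ × Fin ℓ)).PairwiseDisjoint (fun k => E k \ P k) := by
    intro k hk m hm hne
    exact (hEdisj hk hm hne).mono Set.diff_subset Set.diff_subset
  have hIAc : ∫⁻ ω in Aᶜ, F ω ∂μ = I / 2 := by
    rw [hAc, lintegral_biUnion_finset hEPdisj (fun k _ => (hEmeas k).diff (hPmeas k)),
      hIdec, div_eq_mul_inv, Finset.sum_mul]
    exact Finset.sum_congr rfl fun k _ => by
      rw [setLIntegral_congr_fun ((hEmeas k).diff (hPmeas k))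
        (fun ω hω => hFE k ω hω.1),
        setLIntegral_const, hPhalf' k, div_eq_mul_inv, mul_assoc]
  have hIfin : I ≠ ⊤ := by
    have h1 : ∫⁻ ω, (‖x ω‖₊ : ℝ≥0∞) ^ p ∂μ < ⊤ := by
      have := lintegral_rpow_enorm_lt_top_of_eLpNorm_lt_top hpe0 hpeT (Lp.eLpNorm_lt_top x)
      rwa [hper] at this
    have h2 : I = ∫⁻ ω, (‖x ω‖₊ : ℝ≥0∞) ^ p ∂μ :=
      lintegral_congr_ae (hxs.mono fun ω h => by simp [hF, h])
    rw [h2]; exact h1.ne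
  -- norms via lintegrals
  have hrpow : ∀ J : ℝ≥0∞, ((J ^ (1 / p)).toReal) ^ p = J.toReal := by
    intro J
    rw [ENNReal.toReal_rpow, ← ENNReal.rpow_mul, one_div, inv_mul_cancel₀ hp0.ne',
      ENNReal.rpow_one]
  have hnorm_eq : ∀ (B : Set Ω) (hB : MeasurableSet B),
      ‖lpRestrict x hB‖ ^ p = (∫⁻ ω in B, F ω ∂μ).toReal := by
    intro B hB
    have hcoe : ⇑(lpRestrict x hB) =ᵐ[μ] B.indicator ⇑s := by
      have h0 : ⇑(lpRestrict x hB) =ᵐ[μ] B.indicator ⇑x := MemLp.coeFn_toLp _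
      refine h0.trans ?_
      filter_upwards [hxs] with ω h
      by_cases hω : ω ∈ B
      · rw [Set.indicator_of_mem hω, Set.indicator_of_mem hω, h]
      · rw [Set.indicator_of_notMem hω, Set.indicator_of_notMem hω]
    have hlint : ∫⁻ ω, (‖B.indicator (⇑s) ω‖₊ : ℝ≥0∞) ^ p ∂μ = ∫⁻ ω in B, F ω ∂μ := by
      rw [← lintegral_indicator hB]
      apply lintegral_congr
      intro ω
      by_cases hω : ω ∈ B
      · rw [Set.indicator_of_mem hω, Set.indicator_of_mem hω]
      · rw [Set.indicator_of_notMem hω, Set.indicator_of_notMem hω]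
        simp [ENNReal.zero_rpow_of_pos hp0]
    rw [Lp.norm_def, eLpNorm_congr_ae hcoe,
      eLpNorm_eq_lintegral_rpow_enorm_toReal hpe0 hpeT]
    simp_rw [enorm_eq_nnnorm]
    rw [hper, hlint, hrpow]
  have hxnorm : ‖x‖ ^ p = I.toReal := by
    rw [Lp.norm_def, eLpNorm_congr_ae hxs,
      eLpNorm_eq_lintegral_rpow_enorm_toReal hpe0 hpeT]
    simp_rw [enorm_eq_nnnorm]
    rw [hper, hrpow]
  have htwo : ((2 : ℝ≥0∞)).toReal = 2 := by norm_num
  have hi1 : ‖lpRestrict x hA‖ ^ p = ‖x‖ ^ p / 2 := by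
    rw [hnorm_eq A hA, hIA, ENNReal.toReal_div, hxnorm, htwo]
  have hi2 : ‖lpRestrict x hA.compl‖ ^ p = ‖x‖ ^ p / 2 := by
    rw [hnorm_eq Aᶜ hA.compl, hIAc, ENNReal.toReal_div, hxnorm, htwo]
  -- the operator estimates
  set G : Lp ℝ pe μ := ∑ k ∈ S, k.1 • g k with hG
  have haeg : ∀ᵐ ω ∂μ, ∀ k ∈ S, (g k : Ω → ℝ) ω
      = (P k).indicator (fun _ => (1:ℝ)) ω - (E k \ P k).indicator (fun _ => (1:ℝ)) ω :=
    Filter.eventually_all_finset S |>.mpr fun k _ => hg k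
  have haegs : ∀ᵐ ω ∂μ, ∀ k ∈ S, (⇑(k.1 • g k) : Ω → ℝ) ω = k.1 * (g k : Ω → ℝ) ω :=
    Filter.eventually_all_finset S |>.mpr fun k _ =>
      (Lp.coeFn_smul k.1 (g k)).mono fun ω h => by simpa [smul_eq_mul] using h
  have hGcoe : ⇑G =ᵐ[μ] fun ω => ∑ k ∈ S, k.1 * (g k : Ω → ℝ) ω := by
    refine (lp_coeFn_sum _ S).trans ?_
    filter_upwards [haegs] with ω h
    exact Finset.sum_congr rfl fun k hk => h k hk
  have hmain : ∀ᵐ ω ∂μ,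
      A.indicator (⇑x) ω = 2⁻¹ * (x ω + ∑ k ∈ S, k.1 * (g k : Ω → ℝ) ω) ∧
      Aᶜ.indicator (⇑x) ω = 2⁻¹ * (x ω - ∑ k ∈ S, k.1 * (g k : Ω → ℝ) ω) := by
    filter_upwards [hxs, haeg] with ω hxω hgsω
    obtain ⟨k0, hk0S, hk0⟩ := hEcov ω
    have hsum : ∑ k ∈ S, k.1 * (g k : Ω → ℝ) ω = k0.1 * (g k0 : Ω → ℝ) ω := by
      apply Finset.sum_eq_single_of_mem k0 hk0S
      intro m hm hne
      have hnotE : ω ∉ E m := fun hEm => hne (hEuniq ω m k0 hEm hk0)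
      have hz : (g m : Ω → ℝ) ω = 0 := by
        rw [hgsω m hm, Set.indicator_of_notMem (fun h => hnotE (hPsub m h)),
          Set.indicator_of_notMem (fun h : ω ∈ E m \ P m => hnotE h.1)]
        ring
      rw [hz, mul_zero]
    have hk01 : k0.1 = s ω := (Set.mem_singleton_iff.mp (Set.mem_preimage.mp hk0.1)).symm
    by_cases hωP : ω ∈ P k0
    · have hωA : ω ∈ A := (hmemA ω).mpr ⟨k0, hk0S, hωP⟩
      have hgk0 : (g k0 : Ω → ℝ) ω = 1 := by
        rw [hgsω k0 hk0S, Set.indicator_of_mem hωP,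
          Set.indicator_of_notMem (fun h : ω ∈ E k0 \ P k0 => h.2 hωP)]
        ring
      constructor
      · rw [Set.indicator_of_mem hωA, hsum, hgk0, hxω, ← hk01]; ring
      · rw [Set.indicator_of_notMem (fun h : ω ∈ Aᶜ => h hωA), hsum, hgk0, hxω, ← hk01]
        ring
    · have hωA : ω ∉ A := by
        intro h
        obtain ⟨m, hm, hPm⟩ := (hmemA ω).mp h
        have hkm : m = k0 := hEuniq ω m k0 (hPsub m hPm) hk0
        exact hωP (hkm ▸ hPm)
      have hgk0 : (g k0 : Ω → ℝ) ω = -1 := by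
        rw [hgsω k0 hk0S, Set.indicator_of_notMem hωP,
          Set.indicator_of_mem (show ω ∈ E k0 \ P k0 from ⟨hk0, hωP⟩)]
        ring
      constructor
      · rw [Set.indicator_of_notMem hωA, hsum, hgk0, hxω, ← hk01]; ring
      · rw [Set.indicator_of_mem (show ω ∈ Aᶜ from hωA), hsum, hgk0, hxω, ← hk01]; ring
  have hxA : lpRestrict x hA = (2 : ℝ)⁻¹ • (x + G) := by
    apply Lp.ext
    filter_upwards [(MemLp.coeFn_toLp _ : ⇑(lpRestrict x hA) =ᵐ[μ] A.indicator ⇑x),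
      Lp.coeFn_smul (2:ℝ)⁻¹ (x + G), Lp.coeFn_add x G, hGcoe, hmain] with ω h1 h2 h3 h4 h5
    refine (h1.trans ?_ : ⇑(lpRestrict x hA) ω = _)
    rw [h2, Pi.smul_apply, h3, Pi.add_apply, h4, smul_eq_mul]
    exact h5.1
  have hxAc : lpRestrict x hA.compl = (2 : ℝ)⁻¹ • (x - G) := by
    apply Lp.ext
    filter_upwards [(MemLp.coeFn_toLp _ : ⇑(lpRestrict x hA.compl) =ᵐ[μ] Aᶜ.indicator ⇑x),
      Lp.coeFn_smul (2:ℝ)⁻¹ (x - G), Lp.coeFn_sub x G, hGcoe, hmain] with ω h1 h2 h3 h4 h5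
    refine (h1.trans ?_ : ⇑(lpRestrict x hA.compl) ω = _)
    rw [h2, Pi.smul_apply, h3, Pi.sub_apply, h4, smul_eq_mul]
    exact h5.2
  have hTG : ‖T G‖ ≤ C * δ := by
    have hTGdec : T G = ∑ k ∈ S, k.1 • T (g k) := by
      rw [hG, map_sum]
      exact Finset.sum_congr rfl fun k _ => T.map_smul _ _
    calc ‖T G‖ = ‖∑ k ∈ S, k.1 • T (g k)‖ := by rw [hTGdec]
      _ ≤ ∑ k ∈ S, ‖k.1 • T (g k)‖ := norm_sum_le _ _
      _ = ∑ k ∈ S, |k.1| * ‖T (g k)‖ := by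
          exact Finset.sum_congr rfl fun k _ => by rw [norm_smul, Real.norm_eq_abs]
      _ ≤ ∑ k ∈ S, |k.1| * δ :=
          Finset.sum_le_sum fun k _ => mul_le_mul_of_nonneg_left (hgT k).le (abs_nonneg _)
      _ = C * δ := by rw [hC, Finset.sum_mul]
  have hCδ : C * δ < ε := by
    have h1C : (0:ℝ) < 1 + C := by linarith
    rw [hδdef, ← mul_div_assoc, div_lt_iff₀ h1C]
    nlinarith
  have hTA : ‖T (lpRestrict x hA) - (2 : ℝ)⁻¹ • y‖ < ε := by
    rw [hxA, _root_.map_smul, map_add, hy]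
    have heq2 : (2:ℝ)⁻¹ • (y + T G) - (2:ℝ)⁻¹ • y = (2:ℝ)⁻¹ • T G := by
      rw [smul_add]; abel
    rw [heq2, norm_smul, Real.norm_eq_abs]
    have : |(2:ℝ)⁻¹| * ‖T G‖ ≤ ‖T G‖ := by
      rw [abs_of_pos (by norm_num : (0:ℝ) < 2⁻¹)]
      nlinarith [norm_nonneg (T G)]
    linarith
  have hTAc : ‖T (lpRestrict x hA.compl) - (2 : ℝ)⁻¹ • y‖ < ε := by
    rw [hxAc, _root_.map_smul, map_sub, hy]
    have heq2 : (2:ℝ)⁻¹ • (y - T G) - (2:ℝ)⁻¹ • y = -((2:ℝ)⁻¹ • T G) := by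
      rw [smul_sub]; abel
    rw [heq2, norm_neg, norm_smul, Real.norm_eq_abs]
    have : |(2:ℝ)⁻¹| * ‖T G‖ ≤ ‖T G‖ := by
      rw [abs_of_pos (by norm_num : (0:ℝ) < 2⁻¹)]
      nlinarith [norm_nonneg (T G)]
    linarith
  exact ⟨A, hA, hi1, hi2, fun j => ⟨key_half j, key_halfc j⟩, hTA, hTAc⟩
end

section
/- Let (Ω, Σ, μ) be an atomless finite measure space, 1 ≤ p < ∞, T a narrow bounded operator on L_p(μ), and x, y simple functions with Tx = y. Then for each dyadic rational λ = j/2^n with j ∈ {1, ..., 2^n - 1} and each ε > 0 there exists a partition Ω = A ⊔ B with ‖x·1_A‖^p = λ‖x‖^p, ‖y·1_B‖^p = (1-λ)‖y‖^p, and ‖T(x·1_A) - λy‖ < ε. -/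
open MeasureTheory

variable {Ω : Type*} [MeasurableSpace Ω] {μ : Measure Ω} {pe : ENNReal} [Fact (1 ≤ pe)]

/-! ### Auxiliary lemmas -/

set_option linter.unusedSectionVars false
set_option maxHeartbeats 1000000

theorem lpRestrict_coe (x : Lp ℝ pe μ) {A : Set Ω} (hA : MeasurableSet A) :
    (lpRestrict x hA : Ω → ℝ) =ᵐ[μ] A.indicator x :=
  MemLp.coeFn_toLp _

theorem lpRestrict_congr_set (x : Lp ℝ pe μ) {A B : Set Ω} (hA : MeasurableSet A)
    (hB : MeasurableSet B) (h : A = B) : lpRestrict x hA = lpRestrict x hB := by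
  subst h; rfl

theorem lpRestrict_empty (x : Lp ℝ pe μ) :
    lpRestrict x (MeasurableSet.empty : MeasurableSet (∅ : Set Ω)) = 0 := by
  apply Lp.ext
  filter_upwards [lpRestrict_coe x MeasurableSet.empty, Lp.coeFn_zero ℝ pe μ] with ω h1 h2
  rw [h1, h2]; simp

theorem lpRestrict_univ (x : Lp ℝ pe μ) :
    lpRestrict x (MeasurableSet.univ : MeasurableSet (Set.univ : Set Ω)) = x := by
  apply Lp.ext
  filter_upwards [lpRestrict_coe x MeasurableSet.univ] with ω h1
  simp [h1]

theorem lpRestrict_compl (x : Lp ℝ pe μ) {A : Set Ω} (hA : MeasurableSet A) :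
    lpRestrict x hA.compl = x - lpRestrict x hA := by
  apply Lp.ext
  filter_upwards [lpRestrict_coe x hA.compl, lpRestrict_coe x hA,
    Lp.coeFn_sub x (lpRestrict x hA)] with ω h1 h2 h3
  rw [h1, h3, Pi.sub_apply, h2, Set.indicator_compl]
  simp

theorem lpRestrict_union (x : Lp ℝ pe μ) {A B : Set Ω} (hA : MeasurableSet A)
    (hB : MeasurableSet B) (hd : Disjoint A B) :
    lpRestrict x (hA.union hB) = lpRestrict x hA + lpRestrict x hB := by
  apply Lp.ext
  filter_upwards [lpRestrict_coe x (hA.union hB), lpRestrict_coe x hA, lpRestrict_coe x hB,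
    Lp.coeFn_add (lpRestrict x hA) (lpRestrict x hB)] with ω h1 h2 h3 h4
  rw [h1, h4, Pi.add_apply, h2, h3, Set.indicator_union_of_disjoint hd]

theorem integrable_abs_rpow {p : ℝ} (hp : 1 ≤ p) (hpe : pe = ENNReal.ofReal p)
    (f : Lp ℝ pe μ) : Integrable (fun ω => |f ω| ^ p) μ := by
  have hne : pe ≠ 0 := by simp [hpe, ENNReal.ofReal_eq_zero]; linarith
  have := (Lp.memLp f).integrable_norm_rpow hne (by simp [hpe])
  have hpt : pe.toReal = p := by rw [hpe, ENNReal.toReal_ofReal]; linarith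
  rw [hpt] at this
  simpa [Real.norm_eq_abs] using this

theorem norm_pow_eq {p : ℝ} (hp : 1 ≤ p) (hpe : pe = ENNReal.ofReal p)
    (f : Lp ℝ pe μ) : ‖f‖ ^ p = ∫ ω, |f ω| ^ p ∂μ := by
  have hne : pe ≠ 0 := by simp [hpe, ENNReal.ofReal_eq_zero]; linarith
  rw [Lp.norm_def,
    (Lp.memLp f).eLpNorm_eq_integral_rpow_norm hne (by simp [hpe]),
    ENNReal.toReal_ofReal (Real.rpow_nonneg (integral_nonneg fun ω => by positivity) _)]
  have hpt : pe.toReal = p := by rw [hpe, ENNReal.toReal_ofReal]; linarith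
  rw [hpt, Real.rpow_inv_rpow (integral_nonneg fun ω => by positivity) (by linarith)]
  simp [Real.norm_eq_abs]

theorem norm_pow_restrict {p : ℝ} (hp : 1 ≤ p) (hpe : pe = ENNReal.ofReal p)
    (f : Lp ℝ pe μ) {A : Set Ω} (hA : MeasurableSet A) :
    ‖lpRestrict f hA‖ ^ p = ∫ ω in A, |f ω| ^ p ∂μ := by
  rw [norm_pow_eq hp hpe]
  rw [← integral_indicator hA]
  apply integral_congr_ae
  filter_upwards [lpRestrict_coe f hA] with ω h1
  rw [h1]
  by_cases hω : ω ∈ A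
  · rw [Set.indicator_of_mem hω, Set.indicator_of_mem hω]
  · rw [Set.indicator_of_notMem hω, Set.indicator_of_notMem hω, abs_zero,
      Real.zero_rpow (by linarith)]

theorem Lp_coeFn_sum {ι : Type*} (t : Finset ι) (f : ι → Lp ℝ pe μ) :
    ⇑(∑ i ∈ t, f i) =ᵐ[μ] fun ω => ∑ i ∈ t, f i ω := by
  classical
  induction t using Finset.induction_on with
  | empty => simp only [Finset.sum_empty]; exact Lp.coeFn_zero ℝ pe μ
  | insert _ _ hni ih =>
    rename_i a s
    rw [Finset.sum_insert hni]
    filter_upwards [Lp.coeFn_add (f a) (∑ i ∈ s, f i), ih] with ω h1 h2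
    simp only [Finset.sum_insert hni]
    rw [h1, Pi.add_apply, h2]

theorem indicator_biUnion_sum {ι : Type*} (t : Finset ι) (S : ι → Set Ω)
    (hd : (t : Set ι).PairwiseDisjoint S) (f : Ω → ℝ) (ω : Ω) :
    (⋃ i ∈ t, S i).indicator f ω = ∑ i ∈ t, (S i).indicator f ω := by
  classical
  by_cases h : ω ∈ ⋃ i ∈ t, S i
  · obtain ⟨i, hi, hωi⟩ : ∃ i ∈ t, ω ∈ S i := by simpa using h
    rw [Set.indicator_of_mem h, Finset.sum_eq_single_of_mem i hi]
    · rw [Set.indicator_of_mem hωi]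
    · intro j hj hne
      apply Set.indicator_of_notMem
      exact fun hωj => Set.disjoint_left.mp (hd hj hi hne) hωj hωi
  · rw [Set.indicator_of_notMem h]
    refine (Finset.sum_eq_zero fun i hi => ?_).symm
    exact Set.indicator_of_notMem (fun hωi => h (Set.mem_biUnion hi hωi)) f

theorem lpRestrict_biUnion {ι : Type*} (x : Lp ℝ pe μ) (t : Finset ι) (S : ι → Set Ω)
    (hS : ∀ i, MeasurableSet (S i)) (hd : (t : Set ι).PairwiseDisjoint S) :
    lpRestrict x (MeasurableSet.biUnion t.countable_toSet fun i _ => hS i) =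
      ∑ i ∈ t, lpRestrict x (hS i) := by
  apply Lp.ext
  filter_upwards [lpRestrict_coe x (MeasurableSet.biUnion t.countable_toSet fun i _ => hS i),
    Lp_coeFn_sum t (fun i => lpRestrict x (hS i)),
    (Filter.eventually_all_finset t).2 fun i _ => lpRestrict_coe x (hS i)] with ω h1 h2 h3
  rw [h1, h2, Finset.set_biUnion_coe, indicator_biUnion_sum t S hd]
  exact Finset.sum_congr rfl fun i hi => (h3 i hi).symm

theorem cell_halve [IsFiniteMeasure μ] {p : ℝ} (hp : 1 ≤ p)
    (hpe : pe = ENNReal.ofReal p)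
    (T : Lp ℝ pe μ →L[ℝ] Lp ℝ pe μ) (hT : IsNarrow μ pe T)
    (x y : Lp ℝ pe μ) (a b : ℝ) {D : Set Ω} (hD : MeasurableSet D)
    (hxa : ∀ᵐ ω ∂μ, ω ∈ D → x ω = a) (hyb : ∀ᵐ ω ∂μ, ω ∈ D → y ω = b)
    (ε' : ℝ) (hε' : 0 < ε') :
    ∃ E, ∃ hE : MeasurableSet E, E ⊆ D ∧
      (∫ ω in E, |x ω| ^ p ∂μ) = (∫ ω in D, |x ω| ^ p ∂μ) / 2 ∧
      (∫ ω in E, |y ω| ^ p ∂μ) = (∫ ω in D, |y ω| ^ p ∂μ) / 2 ∧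
      ‖T (lpRestrict x hE) - (2⁻¹ : ℝ) • T (lpRestrict x hD)‖ ≤ |a| * ε' / 2 := by
  obtain ⟨u, hu2, hu0, huT⟩ := hT D hD ε' hε'
  have hg := (Lp.aestronglyMeasurable u).aemeasurable
  set g := hg.mk u with hgdef
  have hgm : Measurable g := hg.measurable_mk
  have hgu : (u : Ω → ℝ) =ᵐ[μ] g := hg.ae_eq_mk
  set E : Set Ω := D ∩ g ⁻¹' {1} with hEdef
  have hE : MeasurableSet E := hD.inter (hgm (measurableSet_singleton 1))
  have hED : E ⊆ D := Set.inter_subset_left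
  -- u vanishes off D
  have key0 : ∀ᵐ ω ∂μ, ω ∉ D → u ω = 0 := by
    filter_upwards [hu2] with ω h2 hωD
    have : u ω ^ 2 = 0 := by rw [h2, Set.indicator_of_notMem hωD]
    nlinarith [this, sq_nonneg (u ω), sq_abs (u ω), abs_nonneg (u ω)]
  -- indicator identity
  have key1 : ∀ᵐ ω ∂μ, E.indicator (fun _ => (1 : ℝ)) ω
      = (D.indicator (fun _ => (1 : ℝ)) ω + u ω) / 2 := by
    filter_upwards [hu2, hgu] with ω h2 hgω
    by_cases hωD : ω ∈ D
    · have h2' : u ω * u ω = 1 := by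
        have := h2; rw [Set.indicator_of_mem hωD] at this; nlinarith [this]
      rcases mul_self_eq_one_iff.mp h2' with h1 | h1
      · have hωE : ω ∈ E := ⟨hωD, by simp [← hgω, h1]⟩
        rw [Set.indicator_of_mem hωE, Set.indicator_of_mem hωD, h1]; norm_num
      · have hωE : ω ∉ E := by
          intro hωE
          have : g ω = 1 := hωE.2
          rw [← hgω, h1] at this; norm_num at this
        rw [Set.indicator_of_notMem hωE, Set.indicator_of_mem hωD, h1]; norm_num
    · have hωE : ω ∉ E := fun h => hωD h.1
      have hu : u ω = 0 := by
        have : u ω ^ 2 = 0 := by rw [h2, Set.indicator_of_notMem hωD]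
        nlinarith [this, sq_nonneg (u ω)]
      rw [Set.indicator_of_notMem hωE, Set.indicator_of_notMem hωD, hu]; norm_num
  -- x-indicator identity
  have key2 : E.indicator (x : Ω → ℝ) =ᵐ[μ]
      fun ω => (D.indicator (x : Ω → ℝ) ω + a * u ω) / 2 := by
    filter_upwards [key1, hxa, key0] with ω h1 hxω h0
    by_cases hωD : ω ∈ D
    · have hx : x ω = a := hxω hωD
      rw [Set.indicator_of_mem hωD] at h1 ⊢
      by_cases hωE : ω ∈ E
      · rw [Set.indicator_of_mem hωE] at h1 ⊢
        have hu : u ω = 1 := by linarith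
        rw [hx, hu]; ring
      · rw [Set.indicator_of_notMem hωE] at h1 ⊢
        have hu : u ω = -1 := by linarith
        rw [hx, hu]; ring
    · have hωE : ω ∉ E := fun h => hωD h.1
      rw [Set.indicator_of_notMem hωE, Set.indicator_of_notMem hωD, h0 hωD]; ring
  -- integrability
  have hu_int : Integrable (u : Ω → ℝ) μ := (Lp.memLp u).integrable Fact.out
  have hD_int : Integrable (D.indicator fun _ => (1 : ℝ)) μ :=
    (integrable_const (1 : ℝ)).indicator hD
  -- measure of E
  have hμE : (μ E).toReal = (μ D).toReal / 2 := by
    have h1 : ∫ ω, E.indicator (fun _ => (1 : ℝ)) ω ∂μ = (μ E).toReal := by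
      exact integral_indicator_one hE
    have h2 : ∫ ω, D.indicator (fun _ => (1 : ℝ)) ω ∂μ = (μ D).toReal := by
      exact integral_indicator_one hD
    have h3 : ∫ ω, E.indicator (fun _ => (1 : ℝ)) ω ∂μ
        = (∫ ω, (D.indicator (fun _ => (1 : ℝ)) ω + u ω) ∂μ) / 2 := by
      rw [← integral_div]
      exact integral_congr_ae key1
    rw [h3, integral_add hD_int hu_int, h2, hu0, add_zero] at h1
    linarith
  -- set integrals
  have hsetx : ∀ {S : Set Ω} (hS : MeasurableSet S), S ⊆ D →
      (∫ ω in S, |x ω| ^ p ∂μ) = |a| ^ p * (μ S).toReal := by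
    intro S hS hSD
    rw [setIntegral_congr_ae hS ((hxa.mono) fun ω hω hωS => by rw [hω (hSD hωS)]),
      setIntegral_const, smul_eq_mul, mul_comm, measureReal_def]
  have hsety : ∀ {S : Set Ω} (hS : MeasurableSet S), S ⊆ D →
      (∫ ω in S, |y ω| ^ p ∂μ) = |b| ^ p * (μ S).toReal := by
    intro S hS hSD
    rw [setIntegral_congr_ae hS ((hyb.mono) fun ω hω hωS => by rw [hω (hSD hωS)]),
      setIntegral_const, smul_eq_mul, mul_comm, measureReal_def]
  -- Lp identity
  have hL : lpRestrict x hE = (2⁻¹ : ℝ) • (lpRestrict x hD + a • u) := by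
    apply Lp.ext
    filter_upwards [lpRestrict_coe x hE, lpRestrict_coe x hD, key2,
      Lp.coeFn_smul (2⁻¹ : ℝ) (lpRestrict x hD + a • u),
      Lp.coeFn_add (lpRestrict x hD) (a • u), Lp.coeFn_smul a u] with ω e1 e2 e3 e4 e5 e6
    rw [e1, e3, e4]
    simp only [Pi.smul_apply, smul_eq_mul]
    rw [e5]
    simp only [Pi.add_apply]
    rw [e2, e6]
    simp only [Pi.smul_apply, smul_eq_mul]
    ring
  refine ⟨E, hE, hED, ?_, ?_, ?_⟩
  · rw [hsetx hE hED, hsetx hD (le_refl _), hμE]; ring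
  · rw [hsety hE hED, hsety hD (le_refl _), hμE]; ring
  · rw [hL, _root_.map_smul, map_add, _root_.map_smul]
    have : (2⁻¹ : ℝ) • (T (lpRestrict x hD) + a • T u) - (2⁻¹ : ℝ) • T (lpRestrict x hD)
        = (2⁻¹ : ℝ) • (a • T u) := by
      rw [smul_add]; abel
    rw [this, norm_smul, norm_smul]
    simp only [norm_inv, Real.norm_ofNat, Real.norm_eq_abs]
    rw [mul_comm (|a|) ε', ]
    calc 2⁻¹ * (|a| * ‖T u‖) ≤ 2⁻¹ * (|a| * ε') := by
          apply mul_le_mul_of_nonneg_left _ (by norm_num)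
          exact mul_le_mul_of_nonneg_left huT.le (abs_nonneg a)
      _ = ε' * |a| / 2 := by ring

theorem halve [IsFiniteMeasure μ] {p : ℝ} (hp : 1 ≤ p) (hpe : pe = ENNReal.ofReal p)
    (T : Lp ℝ pe μ →L[ℝ] Lp ℝ pe μ) (hT : IsNarrow μ pe T)
    (x y : Lp ℝ pe μ) (sx sy : SimpleFunc Ω ℝ)
    (hxs : (x : Ω → ℝ) =ᵐ[μ] sx) (hys : (y : Ω → ℝ) =ᵐ[μ] sy)
    {B : Set Ω} (hB : MeasurableSet B) (ε : ℝ) (hε : 0 < ε) :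
    ∃ E, ∃ hE : MeasurableSet E, E ⊆ B ∧
      (∫ ω in E, |x ω| ^ p ∂μ) = (∫ ω in B, |x ω| ^ p ∂μ) / 2 ∧
      (∫ ω in E, |y ω| ^ p ∂μ) = (∫ ω in B, |y ω| ^ p ∂μ) / 2 ∧
      ‖T (lpRestrict x hE) - (2⁻¹ : ℝ) • T (lpRestrict x hB)‖ < ε := by
  classical
  set s : SimpleFunc Ω (ℝ × ℝ) := sx.pair sy with hsdef
  set t : Finset (ℝ × ℝ) := s.range with htdef
  set D : ℝ × ℝ → Set Ω := fun v => B ∩ ↑s ⁻¹' {v} with hDdef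
  have hDm : ∀ v, MeasurableSet (D v) := fun v => hB.inter (s.measurableSet_fiber v)
  have hdisj : (↑t : Set (ℝ × ℝ)).PairwiseDisjoint D := by
    intro v hv w hw hvw
    rw [Function.onFun, Set.disjoint_left]
    rintro ω ⟨_, h1⟩ ⟨_, h2⟩
    exact hvw ((Set.mem_singleton_iff.mp h1).symm.trans (Set.mem_singleton_iff.mp h2))
  have hBeq : B = ⋃ v ∈ t, D v := by
    ext ω
    constructor
    · intro h
      exact Set.mem_biUnion (s.mem_range_self ω) ⟨h, rfl⟩
    · intro h
      obtain ⟨v, _, hω⟩ := Set.mem_iUnion₂.mp h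
      exact hω.1
  set M : ℝ := ∑ v ∈ t, (|v.1| + 1) with hMdef
  have hM0 : 0 ≤ M := Finset.sum_nonneg fun v _ => by positivity
  have hMa : ∑ v ∈ t, |v.1| ≤ M := Finset.sum_le_sum fun v _ => by linarith [abs_nonneg v.1]
  set ε' : ℝ := ε / (M + 1) with hε'def
  have hε' : 0 < ε' := div_pos hε (by linarith)
  -- apply cell_halve to each cell
  have hcell : ∀ v : ℝ × ℝ, ∃ E, ∃ hE : MeasurableSet E, E ⊆ D v ∧
      (∫ ω in E, |x ω| ^ p ∂μ) = (∫ ω in D v, |x ω| ^ p ∂μ) / 2 ∧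
      (∫ ω in E, |y ω| ^ p ∂μ) = (∫ ω in D v, |y ω| ^ p ∂μ) / 2 ∧
      ‖T (lpRestrict x hE) - (2⁻¹ : ℝ) • T (lpRestrict x (hDm v))‖ ≤ |v.1| * ε' / 2 := by
    intro v
    have hxa : ∀ᵐ ω ∂μ, ω ∈ D v → x ω = v.1 := by
      filter_upwards [hxs] with ω hω hmem
      have : s ω = v := hmem.2
      rw [hω]
      rw [hsdef] at this
      simp only [SimpleFunc.pair_apply] at this
      exact congrArg Prod.fst this ▸ rfl
    have hyb : ∀ᵐ ω ∂μ, ω ∈ D v → y ω = v.2 := by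
      filter_upwards [hys] with ω hω hmem
      have : s ω = v := hmem.2
      rw [hω]
      rw [hsdef] at this
      simp only [SimpleFunc.pair_apply] at this
      exact congrArg Prod.snd this ▸ rfl
    exact cell_halve hp hpe T hT x y v.1 v.2 (hDm v) hxa hyb ε' hε'
  choose E hEm hsub hJx hJy hten using hcell
  have hEdisj : (↑t : Set (ℝ × ℝ)).PairwiseDisjoint E :=
    hdisj.mono fun v => hsub v
  set Ef : Set Ω := ⋃ v ∈ t, E v with hEfdef
  have hEf : MeasurableSet Ef := MeasurableSet.biUnion t.countable_toSet fun i _ => hEm i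
  have hEfB : Ef ⊆ B := by
    intro ω hω
    obtain ⟨v, _, hv⟩ := Set.mem_iUnion₂.mp hω
    exact (hsub v hv).1
  have hintx := integrable_abs_rpow hp hpe x
  have hinty := integrable_abs_rpow hp hpe y
  -- sum identities for integrals
  have hsumx : (∫ ω in Ef, |x ω| ^ p ∂μ) = (∫ ω in B, |x ω| ^ p ∂μ) / 2 := by
    rw [hEfdef, integral_biUnion_finset t (fun i _ => hEm i) hEdisj
      (fun i _ => hintx.integrableOn)]
    rw [hBeq, integral_biUnion_finset t (fun i _ => hDm i) hdisj
      (fun i _ => hintx.integrableOn)]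
    rw [Finset.sum_div]
    exact Finset.sum_congr rfl fun v _ => hJx v
  have hsumy : (∫ ω in Ef, |y ω| ^ p ∂μ) = (∫ ω in B, |y ω| ^ p ∂μ) / 2 := by
    rw [hEfdef, integral_biUnion_finset t (fun i _ => hEm i) hEdisj
      (fun i _ => hinty.integrableOn)]
    rw [hBeq, integral_biUnion_finset t (fun i _ => hDm i) hdisj
      (fun i _ => hinty.integrableOn)]
    rw [Finset.sum_div]
    exact Finset.sum_congr rfl fun v _ => hJy v
  -- Lp sums
  have hEsum : lpRestrict x hEf = ∑ v ∈ t, lpRestrict x (hEm v) := by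
    rw [lpRestrict_congr_set x hEf
      (MeasurableSet.biUnion t.countable_toSet fun i _ => hEm i) rfl]
    exact lpRestrict_biUnion x t E hEm hEdisj
  have hBsum : lpRestrict x hB = ∑ v ∈ t, lpRestrict x (hDm v) := by
    rw [lpRestrict_congr_set x hB
      (MeasurableSet.biUnion t.countable_toSet fun i _ => hDm i) hBeq]
    exact lpRestrict_biUnion x t D hDm hdisj
  refine ⟨Ef, hEf, hEfB, hsumx, hsumy, ?_⟩
  have hdiff : T (lpRestrict x hEf) - (2⁻¹ : ℝ) • T (lpRestrict x hB)
      = ∑ v ∈ t, (T (lpRestrict x (hEm v)) - (2⁻¹ : ℝ) • T (lpRestrict x (hDm v))) := by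
    rw [hEsum, hBsum, map_sum, map_sum, Finset.smul_sum, Finset.sum_sub_distrib]
  rw [hdiff]
  calc ‖∑ v ∈ t, (T (lpRestrict x (hEm v)) - (2⁻¹ : ℝ) • T (lpRestrict x (hDm v)))‖
      ≤ ∑ v ∈ t, ‖T (lpRestrict x (hEm v)) - (2⁻¹ : ℝ) • T (lpRestrict x (hDm v))‖ :=
        norm_sum_le _ _
    _ ≤ ∑ v ∈ t, |v.1| * ε' / 2 := Finset.sum_le_sum fun v _ => hten v
    _ = (∑ v ∈ t, |v.1|) * ε' / 2 := by rw [← Finset.sum_div, ← Finset.sum_mul]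
    _ ≤ M * ε' / 2 := by
        have : (∑ v ∈ t, |v.1|) * ε' ≤ M * ε' := mul_le_mul_of_nonneg_right hMa hε'.le
        linarith
    _ < ε := by
        have hq : ε' * (M + 1) = ε := div_mul_cancel₀ ε (by linarith)
        nlinarith [hq, hε', hM0]

theorem dyadic [IsFiniteMeasure μ] {p : ℝ} (hp : 1 ≤ p) (hpe : pe = ENNReal.ofReal p)
    (T : Lp ℝ pe μ →L[ℝ] Lp ℝ pe μ) (hT : IsNarrow μ pe T)
    (x y : Lp ℝ pe μ) (sx sy : SimpleFunc Ω ℝ)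
    (hxs : (x : Ω → ℝ) =ᵐ[μ] sx) (hys : (y : Ω → ℝ) =ᵐ[μ] sy)
    (hy : T x = y) (n : ℕ) :
    ∀ j : ℕ, j ≤ 2 ^ n → ∀ ε : ℝ, 0 < ε →
    ∃ A, ∃ hA : MeasurableSet A,
      (∫ ω in A, |x ω| ^ p ∂μ) = ((j : ℝ) / 2 ^ n) * ∫ ω, |x ω| ^ p ∂μ ∧
      (∫ ω in A, |y ω| ^ p ∂μ) = ((j : ℝ) / 2 ^ n) * ∫ ω, |y ω| ^ p ∂μ ∧
      ‖T (lpRestrict x hA) - ((j : ℝ) / 2 ^ n) • y‖ < ε := by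
  induction n with
  | zero =>
    intro j hj ε hε
    interval_cases j
    · refine ⟨∅, MeasurableSet.empty, ?_, ?_, ?_⟩
      · simp
      · simp
      · rw [lpRestrict_empty]
        simpa using hε
    · refine ⟨Set.univ, MeasurableSet.univ, ?_, ?_, ?_⟩
      · rw [setIntegral_univ]; norm_num
      · rw [setIntegral_univ]; norm_num
      · rw [lpRestrict_univ, hy]
        norm_num
        simpa using hε
  | succ n ih =>
    intro j hj ε hε
    by_cases hjn : j ≤ 2 ^ n
    · obtain ⟨A, hA, hJx, hJy, hTA⟩ := ih j hjn (ε / 2) (by linarith)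
      obtain ⟨E, hE, hEA, hEx, hEy, hTE⟩ := halve hp hpe T hT x y sx sy hxs hys hA
        (ε / 4) (by linarith)
      have hc : ((j : ℝ) / 2 ^ (n + 1)) = ((j : ℝ) / 2 ^ n) / 2 := by
        rw [pow_succ]; ring
      refine ⟨E, hE, ?_, ?_, ?_⟩
      · rw [hEx, hJx, hc]; ring
      · rw [hEy, hJy, hc]; ring
      · have key : T (lpRestrict x hE) - ((j : ℝ) / 2 ^ (n + 1)) • y
            = (T (lpRestrict x hE) - (2⁻¹ : ℝ) • T (lpRestrict x hA))
              + (2⁻¹ : ℝ) • (T (lpRestrict x hA) - ((j : ℝ) / 2 ^ n) • y) := by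
          rw [hc]; module
        rw [key]
        calc ‖_ + _‖ ≤ ‖T (lpRestrict x hE) - (2⁻¹ : ℝ) • T (lpRestrict x hA)‖
              + ‖(2⁻¹ : ℝ) • (T (lpRestrict x hA) - ((j : ℝ) / 2 ^ n) • y)‖ := norm_add_le _ _
          _ < ε / 4 + 2⁻¹ * (ε / 2) := by
              rw [norm_smul]
              simp only [norm_inv, Real.norm_ofNat]
              gcongr
          _ ≤ ε := by linarith
    · push_neg at hjn
      set k : ℕ := j - 2 ^ n with hkdef
      have hjk : j = k + 2 ^ n := by omega
      have hk : k ≤ 2 ^ n := by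
        have : (2:ℕ) ^ (n+1) = 2 ^ n + 2 ^ n := by ring
        omega
      obtain ⟨A, hA, hJx, hJy, hTA⟩ := ih k hk (ε / 4) (by linarith)
      obtain ⟨E, hE, hEA, hEx, hEy, hTE⟩ := halve hp hpe T hT x y sx sy hxs hys hA.compl
        (ε / 4) (by linarith)
      have hdisj : Disjoint A E := Set.disjoint_left.mpr fun ω hω hω' => (hEA hω') hω
      have hintx := integrable_abs_rpow hp hpe x
      have hinty := integrable_abs_rpow hp hpe y
      have hcomplx : (∫ ω in Aᶜ, |x ω| ^ p ∂μ)
          = (∫ ω, |x ω| ^ p ∂μ) - ∫ ω in A, |x ω| ^ p ∂μ := by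
        have := integral_add_compl hA hintx
        linarith
      have hcomply : (∫ ω in Aᶜ, |y ω| ^ p ∂μ)
          = (∫ ω, |y ω| ^ p ∂μ) - ∫ ω in A, |y ω| ^ p ∂μ := by
        have := integral_add_compl hA hinty
        linarith
      have hunionx : (∫ ω in A ∪ E, |x ω| ^ p ∂μ)
          = (∫ ω in A, |x ω| ^ p ∂μ) + ∫ ω in E, |x ω| ^ p ∂μ :=
        setIntegral_union hdisj hE hintx.integrableOn hintx.integrableOn
      have huniony : (∫ ω in A ∪ E, |y ω| ^ p ∂μ)
          = (∫ ω in A, |y ω| ^ p ∂μ) + ∫ ω in E, |y ω| ^ p ∂μ :=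
        setIntegral_union hdisj hE hinty.integrableOn hinty.integrableOn
      have hcast : (j : ℝ) = (k : ℝ) + 2 ^ n := by
        rw [hjk]; push_cast; ring
      have hcoef : ((j : ℝ) / 2 ^ (n + 1)) = (((k : ℝ) / 2 ^ n) + 1) / 2 := by
        rw [hcast, pow_succ]
        field_simp
      refine ⟨A ∪ E, hA.union hE, ?_, ?_, ?_⟩
      · rw [hunionx, hEx, hcomplx, hJx, hcoef]; ring
      · rw [huniony, hEy, hcomply, hJy, hcoef]; ring
      · have hsplit : lpRestrict x (hA.union hE) = lpRestrict x hA + lpRestrict x hE :=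
          lpRestrict_union x hA hE hdisj
        have hAc : T (lpRestrict x hA.compl) = y - T (lpRestrict x hA) := by
          rw [lpRestrict_compl, map_sub, hy]
        have key : T (lpRestrict x (hA.union hE)) - ((j : ℝ) / 2 ^ (n + 1)) • y
            = (T (lpRestrict x hE) - (2⁻¹ : ℝ) • T (lpRestrict x hA.compl))
              + (2⁻¹ : ℝ) • (T (lpRestrict x hA) - ((k : ℝ) / 2 ^ n) • y) := by
          rw [hsplit, map_add, hAc, hcoef]; module
        rw [key]
        calc ‖_ + _‖ ≤ ‖T (lpRestrict x hE) - (2⁻¹ : ℝ) • T (lpRestrict x hA.compl)‖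
              + ‖(2⁻¹ : ℝ) • (T (lpRestrict x hA) - ((k : ℝ) / 2 ^ n) • y)‖ := norm_add_le _ _
          _ < ε / 4 + 2⁻¹ * (ε / 4) := by
              rw [norm_smul]
              simp only [norm_inv, Real.norm_ofNat]
              gcongr
          _ ≤ ε := by linarith

/-- For a narrow `T` on `L_p(μ)` over an atomless finite measure, simple `x, y` with
`Tx = y`, each dyadic `λ = j/2^n` (`1 ≤ j ≤ 2^n - 1`) and `ε > 0`, there is a partition
`Ω = A ⊔ Aᶜ` with `‖x1_A‖^p = λ‖x‖^p`, `‖y1_{Aᶜ}‖^p = (1-λ)‖y‖^p` and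
`‖T(x1_A) - λ y‖ < ε`. -/
theorem stmt17 [IsFiniteMeasure μ]
    (hμ : ∀ A : Set Ω, MeasurableSet A → 0 < μ A →
      ∃ B ⊆ A, MeasurableSet B ∧ 0 < μ B ∧ μ B < μ A)
    (p : ℝ) (hp : 1 ≤ p) (hpe : pe = ENNReal.ofReal p)
    (T : Lp ℝ pe μ →L[ℝ] Lp ℝ pe μ) (hT : IsNarrow μ pe T)
    (x y : Lp ℝ pe μ) (sx sy : SimpleFunc Ω ℝ)
    (hxs : (x : Ω → ℝ) =ᵐ[μ] sx) (hys : (y : Ω → ℝ) =ᵐ[μ] sy)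
    (hy : T x = y) (n j : ℕ) (hj1 : 1 ≤ j) (hj2 : j ≤ 2 ^ n - 1)
    (lam : ℝ) (hlam : lam = (j : ℝ) / 2 ^ n)
    (ε : ℝ) (hε : 0 < ε) :
    ∃ A : Set Ω, ∃ hA : MeasurableSet A,
      ‖lpRestrict x hA‖ ^ p = lam * ‖x‖ ^ p ∧
      ‖lpRestrict y hA.compl‖ ^ p = (1 - lam) * ‖y‖ ^ p ∧
      ‖T (lpRestrict x hA) - lam • y‖ < ε := by
  have hj : j ≤ 2 ^ n := le_trans hj2 (Nat.sub_le _ _)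
  obtain ⟨A, hA, h1, h2, h3⟩ := dyadic hp hpe T hT x y sx sy hxs hys hy n j hj ε hε
  refine ⟨A, hA, ?_, ?_, ?_⟩
  · rw [norm_pow_restrict hp hpe x hA, h1, norm_pow_eq hp hpe x, hlam]
  · rw [norm_pow_restrict hp hpe y hA.compl, norm_pow_eq hp hpe y]
    have h4 : (∫ ω in Aᶜ, |y ω| ^ p ∂μ)
        = (∫ ω, |y ω| ^ p ∂μ) - ∫ ω in A, |y ω| ^ p ∂μ := by
      have := integral_add_compl hA (integrable_abs_rpow hp hpe y)
      linarith
    rw [h4, h2, hlam]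
    ring
  · rw [hlam]
    exact h3
end
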